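/- arXiv:2303.08612 — 8 statements merged into one kernel-verified Lean document; each statement's English description precedes it below -/
import Mathlib

section
/- For every g ≥ 1, writing [3g] = {a_1,...,a_g, b_1,...,b_g, c_1,...,c_g}, the three sequences s_1 = (a_1,...,a_g, b_g,...,b_1), s_2 = (b_1,...,b_g, c_g,...,c_1), s_3 = (c_1,...,c_g, a_g,...,a_1) form a (3, 3g, 2g+1) prefix covering design. -/
open scoped BigOperators

/-- `x` occurs at 1-indexed level `ℓ` in some sequence of `s`. -/
def OccursAt {d K : ℕ} (s : Fin d → List (Fin K)) (x : Fin K) (ℓ : ℕ) : Prop :=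
  1 ≤ ℓ ∧ ∃ i : Fin d, (s i)[ℓ - 1]? = some x

/-- `ℓ_min(x)`: the minimal 1-indexed level at which `x` occurs in any sequence. -/
noncomputable def lMin {d K : ℕ} (s : Fin d → List (Fin K)) (x : Fin K) : ℕ :=
  sInf {ℓ | OccursAt s x ℓ}

/-- `ℓ_max(x)`: the maximal 1-indexed level at which `x` occurs in any sequence. -/
noncomputable def lMax {d K : ℕ} (s : Fin d → List (Fin K)) (x : Fin K) : ℕ :=
  sSup {ℓ | OccursAt s x ℓ}

/-- Total number of occurrences of `x` among the sequences. -/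
def totalCount {d K : ℕ} (s : Fin d → List (Fin K)) (x : Fin K) : ℕ :=
  ∑ i : Fin d, (s i).count x

/-- Triplet condition: every 3-element subset of `[K]` is covered by at most three
prefixes of total length at most `α`. -/
def TripletCond (d K α : ℕ) (s : Fin d → List (Fin K)) : Prop :=
  ∀ a b c : Fin K, a ≠ b → a ≠ c → b ≠ c →
    ∃ (i i' i'' : Fin d) (ℓ ℓ' ℓ'' : ℕ), ℓ + ℓ' + ℓ'' ≤ α ∧
      ∀ x : Fin K, (x = a ∨ x = b ∨ x = c) →
        x ∈ (s i).take ℓ ∨ x ∈ (s i').take ℓ' ∨ x ∈ (s i'').take ℓ''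

/-- Singleton condition: `ℓ_min(x) + ℓ_max(x) ≤ α + 1` for every repeated element `x`. -/
def SingletonCond (d K α : ℕ) (s : Fin d → List (Fin K)) : Prop :=
  ∀ x : Fin K, 2 ≤ totalCount s x → lMin s x + lMax s x ≤ α + 1

/-- A `(d, K, α)` prefix covering design. -/
def IsPCD (d K α : ℕ) (s : Fin d → List (Fin K)) : Prop :=
  TripletCond d K α s ∧ SingletonCond d K α s

/-- A convenient embedding of a doubly-indexed element into `Fin N`. -/
def pcdElem (off a b N : ℕ) (h : off + a * b ≤ N) (i : Fin a) (t : Fin b) : Fin N :=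
  ⟨off + (i.1 * b + t.1), by
    have hi := i.isLt
    have ht := t.isLt
    have h2 : i.1 * b + t.1 < a * b := by
      calc i.1 * b + t.1 < i.1 * b + b := by omega
        _ = (i.1 + 1) * b := (Nat.succ_mul _ _).symm
        _ ≤ a * b := Nat.mul_le_mul_right _ hi
    omega⟩

/-- A `(v, k, 2)` covering design with `d` blocks. -/
def IsCoveringDesign (v k d : ℕ) (B : Fin d → Finset (Fin v)) : Prop :=
  (∀ i, (B i).card = k) ∧ ∀ x y : Fin v, x ≠ y → ∃ i, x ∈ B i ∧ y ∈ B i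

/-- The set of qualities `K/α` of `(d, K, α)` prefix covering designs; `γ_d` is its supremum. -/
def gammaSet (d : ℕ) : Set ℝ :=
  {q | ∃ (K α : ℕ) (s : Fin d → List (Fin K)),
    4 ≤ K ∧ 0 < α ∧ IsPCD d K α s ∧ q = (K : ℝ) / (α : ℝ)}

namespace PCD1

def seqs (g : ℕ) : Fin 3 → List (Fin (3 * g)) := fun i =>
  List.ofFn (fun t : Fin g => pcdElem 0 3 g (3 * g) (by simp) i t) ++
  (List.ofFn (fun t : Fin g => pcdElem 0 3 g (3 * g) (by simp) (i + 1) t)).reverse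

lemma seqs_len (g : ℕ) (i : Fin 3) : (seqs g i).length = 2 * g := by
  simp [seqs]; omega

lemma getElem_lo (g : ℕ) (i : Fin 3) (k : ℕ) (hk : k < g) (hk' : k < (seqs g i).length) :
    (seqs g i)[k] = pcdElem 0 3 g (3 * g) (by simp) i ⟨k, hk⟩ := by
  simp only [seqs]
  rw [List.getElem_append_left (by simpa using hk), List.getElem_ofFn]

lemma getElem_hi (g : ℕ) (i : Fin 3) (k : ℕ) (hk : g ≤ k) (hk2 : k < 2 * g)
    (hk' : k < (seqs g i).length) :
    (seqs g i)[k] = pcdElem 0 3 g (3 * g) (by simp) (i + 1) ⟨2 * g - 1 - k, by omega⟩ := by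
  simp only [seqs]
  rw [List.getElem_append_right (by simpa using hk)]
  rw [List.getElem_reverse, List.getElem_ofFn]
  congr 1
  apply Fin.ext
  simp
  omega

lemma pcd_inj (g : ℕ) (i j : Fin 3) (u v : ℕ) (hu : u < g) (hv : v < g)
    (h : pcdElem 0 3 g (3 * g) (by simp) i ⟨u, hu⟩ =
      pcdElem 0 3 g (3 * g) (by simp) j ⟨v, hv⟩) : i = j ∧ u = v := by
  have h' : i.1 * g + u = j.1 * g + v := by
    have := congrArg Fin.val h
    simpa [pcdElem] using this
  fin_cases i <;> fin_cases j <;> simp_all <;> omega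

lemma fwd_mem (g : ℕ) (i : Fin 3) (t : ℕ) (ht : t < g) :
    pcdElem 0 3 g (3 * g) (by simp) i ⟨t, ht⟩ ∈ (seqs g i).take (t + 1) := by
  rw [List.mem_take_iff_getElem]
  refine ⟨t, lt_min (by omega) (by rw [seqs_len]; omega), ?_⟩
  exact getElem_lo g i t ht _

lemma bwd_mem (g : ℕ) (i : Fin 3) (t : ℕ) (ht : t < g) :
    pcdElem 0 3 g (3 * g) (by simp) (i + 1) ⟨t, ht⟩ ∈ (seqs g i).take (2 * g - t) := by
  rw [List.mem_take_iff_getElem]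
  refine ⟨2 * g - 1 - t, lt_min (by omega) (by rw [seqs_len]; omega), ?_⟩
  rw [getElem_hi g i (2 * g - 1 - t) (by omega) (by omega)]
  congr 1
  apply Fin.ext
  simp
  omega

lemma mem_take_mono {α : Type*} {l : List α} {x : α} {m n : ℕ} (h : x ∈ l.take m)
    (hmn : m ≤ n) : x ∈ l.take n := by
  rw [List.mem_take_iff_getElem] at h ⊢
  obtain ⟨k, hk, hx⟩ := h
  exact ⟨k, lt_min (lt_of_lt_of_le (lt_of_lt_of_le hk (min_le_left _ _)) hmn)
    (lt_of_lt_of_le hk (min_le_right _ _)), hx⟩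

lemma exists_repr (g : ℕ) (hg : 1 ≤ g) (x : Fin (3 * g)) :
    ∃ (j : Fin 3) (t : ℕ) (ht : t < g), x = pcdElem 0 3 g (3 * g) (by simp) j ⟨t, ht⟩ := by
  refine ⟨⟨x.1 / g, ?_⟩, x.1 % g, Nat.mod_lt _ (by omega), ?_⟩
  · have hx := x.2
    exact Nat.div_lt_of_lt_mul (by omega)
  · apply Fin.ext
    simp [pcdElem]
    exact (Nat.div_add_mod' x.1 g).symm

lemma occurs_iff (g : ℕ) (hg : 1 ≤ g) (j : Fin 3) (t : ℕ) (ht : t < g) (ℓ : ℕ) :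
    OccursAt (seqs g) (pcdElem 0 3 g (3 * g) (by simp) j ⟨t, ht⟩) ℓ ↔
      ℓ = t + 1 ∨ ℓ = 2 * g - t := by
  constructor
  · rintro ⟨h1, i, hi⟩
    rw [List.getElem?_eq_some_iff] at hi
    obtain ⟨hlen, hval⟩ := hi
    have hlen' : ℓ - 1 < 2 * g := by rw [seqs_len] at hlen; exact hlen
    by_cases hlo : ℓ - 1 < g
    · rw [getElem_lo g i (ℓ - 1) hlo] at hval
      obtain ⟨_, h2⟩ := pcd_inj g i j (ℓ - 1) t hlo ht hval
      omega
    · rw [getElem_hi g i (ℓ - 1) (by omega) hlen'] at hval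
      obtain ⟨_, h2⟩ := pcd_inj g (i + 1) j (2 * g - 1 - (ℓ - 1)) t (by omega) ht hval
      omega
  · have hj : j - 1 + 1 = j := by
      revert j; decide
    rintro (rfl | rfl)
    · refine ⟨by omega, j, ?_⟩
      rw [List.getElem?_eq_some_iff]
      refine ⟨by rw [seqs_len]; omega, ?_⟩
      simpa using getElem_lo g j t ht (by rw [seqs_len]; omega)
    · refine ⟨by omega, j - 1, ?_⟩
      rw [List.getElem?_eq_some_iff]
      refine ⟨by rw [seqs_len]; omega, ?_⟩
      rw [getElem_hi g (j - 1) (2 * g - t - 1) (by omega) (by omega)]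
      rw [hj]
      congr 1
      apply Fin.ext
      simp
      omega

lemma cfwd (g : ℕ) (j : Fin 3) (t : ℕ) (ht : t < g) (x : Fin (3 * g))
    (hx : x = pcdElem 0 3 g (3 * g) (by simp) j ⟨t, ht⟩) :
    x ∈ (seqs g j).take (t + 1) := hx ▸ fwd_mem g j t ht

lemma cbwd (g : ℕ) (j : Fin 3) (t : ℕ) (ht : t < g) (x : Fin (3 * g))
    (hx : x = pcdElem 0 3 g (3 * g) (by simp) j ⟨t, ht⟩) :
    x ∈ (seqs g (j - 1)).take (2 * g - t) := by
  have hj : j - 1 + 1 = j := by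
    have : ∀ u : Fin 3, u - 1 + 1 = u := by decide
    exact this j
  subst hx
  have := bwd_mem g (j - 1) t ht
  rwa [hj] at this

lemma tri_cyc (g : ℕ) (hg : 1 ≤ g) (x y z : Fin (3 * g)) (j : Fin 3) (tx ty tz : ℕ)
    (htx : tx < g) (hty : ty < g) (htz : tz < g)
    (hx : x = pcdElem 0 3 g (3 * g) (by simp) j ⟨tx, htx⟩)
    (hy : y = pcdElem 0 3 g (3 * g) (by simp) (j + 1) ⟨ty, hty⟩)
    (hz : z = pcdElem 0 3 g (3 * g) (by simp) (j + 2) ⟨tz, htz⟩) :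
    ∃ (i i' i'' : Fin 3) (ℓ ℓ' ℓ'' : ℕ), ℓ + ℓ' + ℓ'' ≤ 2 * g + 1 ∧
      ∀ w : Fin (3 * g), (w = x ∨ w = y ∨ w = z) →
        w ∈ (seqs g i).take ℓ ∨ w ∈ (seqs g i').take ℓ' ∨ w ∈ (seqs g i'').take ℓ'' := by
  have d1 : ∀ u : Fin 3, u - 1 = u + 2 := by decide
  have e1 : j - 1 = j + 2 := d1 j
  have e2 : (j + 1) - 1 = j := by rw [d1 (j + 1)]; have : ∀ u : Fin 3, u + 1 + 2 = u := by decide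
                                  exact this j
  have e3 : (j + 2) - 1 = j + 1 := by rw [d1 (j + 2)]
                                      have : ∀ u : Fin 3, u + 2 + 2 = u + 1 := by decide
                                      exact this j
  by_cases hxy : ty ≤ tx
  · by_cases hxz : tz ≤ tx
    · -- tx max
      refine ⟨j + 2, j + 1, j, 2 * g - tx, ty + 1, 0, by omega, ?_⟩
      rintro w (rfl | rfl | rfl)
      · left; have := cbwd g j tx htx w hx; rwa [e1] at this
      · right; left; exact cfwd g (j + 1) ty hty w hy
      · left; exact mem_take_mono (cfwd g (j + 2) tz htz w hz) (by omega)
    · -- tz max (tx < tz, ty ≤ tx < tz)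
      refine ⟨j + 1, j, j, 2 * g - tz, tx + 1, 0, by omega, ?_⟩
      rintro w (rfl | rfl | rfl)
      · right; left; exact cfwd g j tx htx w hx
      · left; exact mem_take_mono (cfwd g (j + 1) ty hty w hy) (by omega)
      · left; have := cbwd g (j + 2) tz htz w hz; rwa [e3] at this
  · by_cases hyz : tz ≤ ty
    · -- ty max
      refine ⟨j, j + 2, j, 2 * g - ty, tz + 1, 0, by omega, ?_⟩
      rintro w (rfl | rfl | rfl)
      · left; exact mem_take_mono (cfwd g j tx htx w hx) (by omega)
      · left; have := cbwd g (j + 1) ty hty w hy; rwa [e2] at this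
      · right; left; exact cfwd g (j + 2) tz htz w hz
    · -- tz max
      refine ⟨j + 1, j, j, 2 * g - tz, tx + 1, 0, by omega, ?_⟩
      rintro w (rfl | rfl | rfl)
      · right; left; exact cfwd g j tx htx w hx
      · left; exact mem_take_mono (cfwd g (j + 1) ty hty w hy) (by omega)
      · left; have := cbwd g (j + 2) tz htz w hz; rwa [e3] at this

lemma pair_case (g : ℕ) (hg : 1 ≤ g) (x y z : Fin (3 * g)) (j j' : Fin 3) (tx ty tz : ℕ)
    (htx : tx < g) (hty : ty < g) (htz : tz < g)
    (hx : x = pcdElem 0 3 g (3 * g) (by simp) j ⟨tx, htx⟩)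
    (hy : y = pcdElem 0 3 g (3 * g) (by simp) j ⟨ty, hty⟩)
    (hz : z = pcdElem 0 3 g (3 * g) (by simp) j' ⟨tz, htz⟩) :
    ∃ (i i' i'' : Fin 3) (ℓ ℓ' ℓ'' : ℕ), ℓ + ℓ' + ℓ'' ≤ 2 * g + 1 ∧
      ∀ w : Fin (3 * g), (w = x ∨ w = y ∨ w = z) →
        w ∈ (seqs g i).take ℓ ∨ w ∈ (seqs g i').take ℓ' ∨ w ∈ (seqs g i'').take ℓ'' := by
  refine ⟨j, j', j, max tx ty + 1, tz + 1, 0, ?_, ?_⟩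
  · have hm : max tx ty < g := max_lt htx hty
    omega
  · rintro w (rfl | rfl | rfl)
    · left; exact mem_take_mono (cfwd g j tx htx w hx) (by omega)
    · left; exact mem_take_mono (cfwd g j ty hty w hy) (by omega)
    · right; left; exact cfwd g j' tz htz w hz

lemma triplet (g : ℕ) (hg : 1 ≤ g) : TripletCond 3 (3 * g) (2 * g + 1) (seqs g) := by
  intro a b c hab hac hbc
  obtain ⟨ja, ta, hta, ha⟩ := exists_repr g hg a
  obtain ⟨jb, tb, htb, hb⟩ := exists_repr g hg b
  obtain ⟨jc, tc, htc, hc⟩ := exists_repr g hg c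
  by_cases h1 : ja = jb
  · subst h1
    obtain ⟨i, i', i'', ℓ, ℓ', ℓ'', hs, hcov⟩ :=
      pair_case g hg a b c ja jc ta tb tc hta htb htc ha hb hc
    exact ⟨i, i', i'', ℓ, ℓ', ℓ'', hs, fun w hw => hcov w (by tauto)⟩
  · by_cases h2 : ja = jc
    · subst h2
      obtain ⟨i, i', i'', ℓ, ℓ', ℓ'', hs, hcov⟩ :=
        pair_case g hg a c b ja jb ta tc tb hta htc htb ha hc hb
      exact ⟨i, i', i'', ℓ, ℓ', ℓ'', hs, fun w hw => hcov w (by tauto)⟩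
    · by_cases h3 : jb = jc
      · subst h3
        obtain ⟨i, i', i'', ℓ, ℓ', ℓ'', hs, hcov⟩ :=
          pair_case g hg b c a jb ja tb tc ta htb htc hta hb hc ha
        exact ⟨i, i', i'', ℓ, ℓ', ℓ'', hs, fun w hw => hcov w (by tauto)⟩
      · have key : ∀ u v w : Fin 3, u ≠ v → u ≠ w → v ≠ w →
            (v = u + 1 ∧ w = u + 2) ∨ (w = u + 1 ∧ v = u + 2) := by decide
        rcases key ja jb jc h1 h2 h3 with ⟨e1, e2⟩ | ⟨e1, e2⟩
        · exact tri_cyc g hg a b c ja ta tb tc hta htb htc ha (e1 ▸ hb) (e2 ▸ hc)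
        · obtain ⟨i, i', i'', ℓ, ℓ', ℓ'', hs, hcov⟩ :=
            tri_cyc g hg a c b ja ta tc tb hta htc htb ha (e1 ▸ hc) (e2 ▸ hb)
          exact ⟨i, i', i'', ℓ, ℓ', ℓ'', hs, fun w hw => hcov w (by tauto)⟩

lemma singleton (g : ℕ) (hg : 1 ≤ g) : SingletonCond 3 (3 * g) (2 * g + 1) (seqs g) := by
  intro x _
  obtain ⟨j, t, ht, hx⟩ := exists_repr g hg x
  subst hx
  have hmin : lMin (seqs g) (pcdElem 0 3 g (3 * g) (by simp) j ⟨t, ht⟩) ≤ t + 1 :=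
    Nat.sInf_le ((occurs_iff g hg j t ht (t + 1)).mpr (Or.inl rfl))
  have hmax : lMax (seqs g) (pcdElem 0 3 g (3 * g) (by simp) j ⟨t, ht⟩) ≤ 2 * g - t := by
    apply csSup_le
    · exact ⟨t + 1, (occurs_iff g hg j t ht (t + 1)).mpr (Or.inl rfl)⟩
    · intro b hb
      rcases (occurs_iff g hg j t ht b).mp hb with h | h <;> omega
  omega

end PCD1

theorem stmt_1 (g : ℕ) (hg : 1 ≤ g) :
    IsPCD 3 (3 * g) (2 * g + 1)
      (fun i : Fin 3 =>
        List.ofFn (fun t : Fin g => pcdElem 0 3 g (3 * g) (by simp) i t) ++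
        (List.ofFn (fun t : Fin g => pcdElem 0 3 g (3 * g) (by simp) (i + 1) t)).reverse) := by
  exact ⟨PCD1.triplet g hg, PCD1.singleton g hg⟩
end

section
/- For every (v, k, 2) covering design with d ≥ 2 blocks, it holds that k ≥ 2v/d. -/
open scoped BigOperators

theorem stmt_3 (v k d : ℕ) (hv : 2 ≤ v) (hk : 2 ≤ k) (hd : 2 ≤ d)
    (B : Fin d → Finset (Fin v)) (h : IsCoveringDesign v k d B) :
    2 * v ≤ k * d := by
  obtain ⟨hcard, hcov⟩ := h
  by_cases hall : ∀ x : Fin v, 2 ≤ (Finset.univ.filter (fun i => x ∈ B i)).card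
  · have hsum : ∑ i : Fin d, (B i).card =
        ∑ x : Fin v, (Finset.univ.filter (fun i => x ∈ B i)).card := by
      simp only [Finset.card_eq_sum_ones]
      rw [Finset.sum_comm' (s := Finset.univ) (t := fun i => B i)
        (t' := Finset.univ) (s' := fun x => Finset.univ.filter (fun i => x ∈ B i))
        (fun i x => by simp [and_comm])]
    have h1 : k * d = ∑ i : Fin d, (B i).card := by
      simp [hcard, Finset.sum_const, mul_comm]
    have h2 : 2 * v ≤ ∑ x : Fin v, (Finset.univ.filter (fun i => x ∈ B i)).card := by
      calc 2 * v = ∑ _x : Fin v, 2 := by simp [mul_comm]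
        _ ≤ _ := Finset.sum_le_sum (fun x _ => hall x)
    omega
  · push_neg at hall
    obtain ⟨x, hx⟩ := hall
    -- there is some y ≠ x, so some block contains x
    obtain ⟨y, hy⟩ : ∃ y : Fin v, y ≠ x := by
      have : 1 < Fintype.card (Fin v) := by rw [Fintype.card_fin]; omega
      exact Fintype.exists_ne_of_one_lt_card this x
    obtain ⟨i0, hxi0, _⟩ := hcov x y (Ne.symm hy)
    -- every z is in B i0
    have hsub : (Finset.univ : Finset (Fin v)) ⊆ B i0 := by
      intro z _
      by_cases hz : z = x
      · subst hz; exact hxi0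
      · obtain ⟨j, hxj, hzj⟩ := hcov x z (fun e => hz e.symm)
        have hji0 : j = i0 := by
          by_contra hne
          have : 2 ≤ (Finset.univ.filter (fun i => x ∈ B i)).card := by
            have : ({j, i0} : Finset (Fin d)) ⊆
                Finset.univ.filter (fun i => x ∈ B i) := by
              intro t ht
              simp only [Finset.mem_insert, Finset.mem_singleton] at ht
              rcases ht with rfl | rfl <;> simp [hxj, hxi0]
            calc 2 = ({j, i0} : Finset (Fin d)).card := by
                  rw [Finset.card_insert_of_notMem (by simpa using hne)]; simp
              _ ≤ _ := Finset.card_le_card this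
          omega
        rw [← hji0]; exact hzj
    have hkv : v ≤ k := by
      have := Finset.card_le_card hsub
      simpa [hcard i0] using this
    nlinarith
end

section
/- Let d ≥ 3, k ∈ ℕ, and let v be a multiple of d such that there is a (v,k,2) covering design with d blocks B_1,...,B_d admitting a multi-matching, i.e., there exist U_i ⊆ B_i with |U_i| = v/d such that U_1,...,U_d partition [v]. Order each block so that U_i occupies the first v/d positions, and define d sequences s_1,...,s_d of length 2k by prepending k fresh distinct elements to each ordered block (kd new elements in total). Then s_1,...,s_d form a (d, (v/d + k)·d, 3k + v/d) prefix covering design. -/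
open scoped BigOperators

theorem stmt_5 (d k v v' : ℕ) (hd : 3 ≤ d) (hk : v' ≤ k) (hv : v = v' * d)
    (b : Fin d → List (Fin v))
    (hlen : ∀ i, (b i).length = k)
    (hnodup : ∀ i, (b i).Nodup)
    (hcover : ∀ x y : Fin v, x ≠ y → ∃ i, x ∈ b i ∧ y ∈ b i)
    (hpart : ∀ x : Fin v, ∃! i : Fin d, x ∈ (b i).take v') :
    IsPCD d (v + d * k) (3 * k + v')
      (fun i =>
        List.ofFn (fun j : Fin k => pcdElem v d k (v + d * k) le_rfl i j) ++
        (b i).map (Fin.castLE (Nat.le_add_right v (d * k)))) := by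
  set s : Fin d → List (Fin (v + d * k)) := fun i =>
        List.ofFn (fun j : Fin k => pcdElem v d k (v + d * k) le_rfl i j) ++
        (b i).map (Fin.castLE (Nat.le_add_right v (d * k))) with hs
  have hAlen : ∀ i, (List.ofFn (fun j : Fin k => pcdElem v d k (v + d * k) le_rfl i j)).length = k := by
    intro i; simp
  have hBlen : ∀ i, ((b i).map (Fin.castLE (Nat.le_add_right v (d * k)))).length = k := by
    intro i; simp [hlen i]
  have hslen : ∀ i, (s i).length = k + k := by
    intro i; simp [hs, hlen i]
  have htake_k : ∀ i, (s i).take k =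
      List.ofFn (fun j : Fin k => pcdElem v d k (v + d * k) le_rfl i j) := by
    intro i; rw [hs]; exact List.take_left' (hAlen i)
  have htake_add : ∀ i m, (s i).take (k + m) =
      List.ofFn (fun j : Fin k => pcdElem v d k (v + d * k) le_rfl i j) ++
        ((b i).map (Fin.castLE (Nat.le_add_right v (d * k)))).take m := by
    intro i m
    rw [hs, List.take_append, hAlen i,
      List.take_of_length_le (by rw [hAlen i]; omega), Nat.add_sub_cancel_left]
  -- fresh elements occur within the first k positions
  have Hfresh : ∀ x : Fin (v + d * k), v ≤ x.1 → ∃ i, x ∈ (s i).take k := by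
    intro x hx
    have hxlt := x.isLt
    set m := x.1 - v with hm
    have hmlt : m < d * k := by omega
    have hk0 : 0 < k := by
      rcases Nat.eq_zero_or_pos k with h | h
      · rw [h, Nat.mul_zero] at hmlt; omega
      · exact h
    have hmlt' : m < k * d := by rw [Nat.mul_comm]; exact hmlt
    refine ⟨⟨m / k, Nat.div_lt_of_lt_mul hmlt'⟩, ?_⟩
    rw [htake_k]
    rw [List.mem_ofFn]
    refine ⟨⟨m % k, Nat.mod_lt _ hk0⟩, ?_⟩
    apply Fin.ext
    show v + (m / k * k + m % k) = x.1
    have h1 := Nat.div_add_mod m k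
    have h2 : m / k * k = k * (m / k) := Nat.mul_comm _ _
    omega
  -- old elements in the matching part occur within the first k + v' positions
  have Hold : ∀ x : Fin (v + d * k), x.1 < v → ∃ i, x ∈ (s i).take (k + v') := by
    intro x hx
    obtain ⟨i, hi, -⟩ := hpart ⟨x.1, hx⟩
    refine ⟨i, ?_⟩
    rw [htake_add]
    apply List.mem_append_right
    rw [← List.map_take]
    have : x = Fin.castLE (Nat.le_add_right v (d * k)) ⟨x.1, hx⟩ := by apply Fin.ext; rfl
    rw [this]
    exact List.mem_map_of_mem hi
  -- any element of a block occurs in the full sequence (take (k+k))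
  have Hmem : ∀ (i : Fin d) (y : Fin v), y ∈ b i →
      Fin.castLE (Nat.le_add_right v (d * k)) y ∈ (s i).take (k + k) := by
    intro i y hy
    rw [List.take_of_length_le (by rw [hslen i]), hs]
    exact List.mem_append_right _ (List.mem_map_of_mem hy)
  have Hpair : ∀ x y : Fin (v + d * k), x.1 < v → y.1 < v → x ≠ y →
      ∃ i, x ∈ (s i).take (k + k) ∧ y ∈ (s i).take (k + k) := by
    intro x y hx hy hxy
    obtain ⟨i, hxi, hyi⟩ := hcover ⟨x.1, hx⟩ ⟨y.1, hy⟩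
      (by intro h; exact hxy (Fin.ext (Fin.mk.inj h)))
    have ex : x = Fin.castLE (Nat.le_add_right v (d * k)) ⟨x.1, hx⟩ := Fin.ext rfl
    have ey : y = Fin.castLE (Nat.le_add_right v (d * k)) ⟨y.1, hy⟩ := Fin.ext rfl
    exact ⟨i, by rw [ex]; exact Hmem i _ hxi, by rw [ey]; exact Hmem i _ hyi⟩
  constructor
  · -- Triplet condition
    intro a c e hab hac hbc
    rcases Nat.lt_or_ge a.1 v with ha | ha <;>
      rcases Nat.lt_or_ge c.1 v with hc | hc <;>
        rcases Nat.lt_or_ge e.1 v with he | he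
    · -- all old
      obtain ⟨i, hia, hic⟩ := Hpair a c ha hc hab
      obtain ⟨j, hje⟩ := Hold e he
      refine ⟨i, j, i, k + k, k + v', 0, by omega, ?_⟩
      rintro x (rfl | rfl | rfl)
      · exact Or.inl hia
      · exact Or.inl hic
      · exact Or.inr (Or.inl hje)
    · -- a, c old; e fresh
      obtain ⟨i, hia, hic⟩ := Hpair a c ha hc hab
      obtain ⟨j, hje⟩ := Hfresh e he
      refine ⟨i, j, i, k + k, k, 0, by omega, ?_⟩
      rintro x (rfl | rfl | rfl)
      · exact Or.inl hia
      · exact Or.inl hic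
      · exact Or.inr (Or.inl hje)
    · -- a, e old; c fresh
      obtain ⟨i, hia, hie⟩ := Hpair a e ha he hac
      obtain ⟨j, hjc⟩ := Hfresh c hc
      refine ⟨i, j, i, k + k, k, 0, by omega, ?_⟩
      rintro x (rfl | rfl | rfl)
      · exact Or.inl hia
      · exact Or.inr (Or.inl hjc)
      · exact Or.inl hie
    · -- a old; c, e fresh
      obtain ⟨i, hia⟩ := Hold a ha
      obtain ⟨j, hjc⟩ := Hfresh c hc
      obtain ⟨l, hle⟩ := Hfresh e he
      refine ⟨i, j, l, k + v', k, k, by omega, ?_⟩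
      rintro x (rfl | rfl | rfl)
      · exact Or.inl hia
      · exact Or.inr (Or.inl hjc)
      · exact Or.inr (Or.inr hle)
    · -- c, e old; a fresh
      obtain ⟨i, hic, hie⟩ := Hpair c e hc he hbc
      obtain ⟨j, hja⟩ := Hfresh a ha
      refine ⟨i, j, i, k + k, k, 0, by omega, ?_⟩
      rintro x (rfl | rfl | rfl)
      · exact Or.inr (Or.inl hja)
      · exact Or.inl hic
      · exact Or.inl hie
    · -- c old; a, e fresh
      obtain ⟨i, hic⟩ := Hold c hc
      obtain ⟨j, hja⟩ := Hfresh a ha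
      obtain ⟨l, hle⟩ := Hfresh e he
      refine ⟨i, j, l, k + v', k, k, by omega, ?_⟩
      rintro x (rfl | rfl | rfl)
      · exact Or.inr (Or.inl hja)
      · exact Or.inl hic
      · exact Or.inr (Or.inr hle)
    · -- e old; a, c fresh
      obtain ⟨i, hie⟩ := Hold e he
      obtain ⟨j, hja⟩ := Hfresh a ha
      obtain ⟨l, hlc⟩ := Hfresh c hc
      refine ⟨i, j, l, k + v', k, k, by omega, ?_⟩
      rintro x (rfl | rfl | rfl)
      · exact Or.inr (Or.inl hja)
      · exact Or.inr (Or.inr hlc)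
      · exact Or.inl hie
    · -- all fresh
      obtain ⟨j, hja⟩ := Hfresh a ha
      obtain ⟨l, hlc⟩ := Hfresh c hc
      obtain ⟨i, hie⟩ := Hfresh e he
      refine ⟨j, l, i, k, k, k, by omega, ?_⟩
      rintro x (rfl | rfl | rfl)
      · exact Or.inl hja
      · exact Or.inr (Or.inl hlc)
      · exact Or.inr (Or.inr hie)
  · -- Singleton condition
    intro x hx
    -- x occurs somewhere
    have hxmem : ∃ i, x ∈ s i := by
      by_contra h
      push_neg at h
      have : totalCount s x = 0 := by
        unfold totalCount
        exact Finset.sum_eq_zero fun i _ => List.count_eq_zero.2 (h i)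
      omega
    obtain ⟨i0, hi0⟩ := hxmem
    -- occurrence from membership in a take
    have occ_of_take : ∀ (i : Fin d) (m : ℕ), x ∈ (s i).take m →
        ∃ ℓ, OccursAt s x ℓ ∧ ℓ ≤ m := by
      intro i m hmem
      obtain ⟨p, hp, hpe⟩ := List.getElem_of_mem hmem
      have hpm : p < m := lt_of_lt_of_le hp (by simp [List.length_take])
      refine ⟨p + 1, ⟨Nat.le_add_left _ _, i, ?_⟩, hpm⟩
      have : (s i).take m = (s i).take m := rfl
      have h1 : ((s i).take m)[p]? = some x := by
        rw [List.getElem?_eq_getElem hp, hpe]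
      rw [List.getElem?_take_of_lt hpm] at h1  -- name may vary
      simpa using h1
    -- any occurrence level is ≤ k + k
    have occ_le : ∀ ℓ, OccursAt s x ℓ → ℓ ≤ k + k := by
      rintro ℓ ⟨hℓ1, i, hi⟩
      by_contra h
      rw [List.getElem?_eq_none (by rw [hslen i]; omega)] at hi
      cases hi
    -- lMax ≤ k + k
    have hmax : lMax s x ≤ k + k := by
      obtain ⟨ℓ0, hℓ0, -⟩ := occ_of_take i0 (k + k)
        (by rw [List.take_of_length_le (by rw [hslen i0])]; exact hi0)
      exact csSup_le ⟨ℓ0, hℓ0⟩ occ_le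
    -- lMin ≤ k + v'
    have hmin : lMin s x ≤ k + v' := by
      rcases Nat.lt_or_ge x.1 v with h | h
      · obtain ⟨i, hi⟩ := Hold x h
        obtain ⟨ℓ, hℓ, hℓle⟩ := occ_of_take i (k + v') hi
        exact le_trans (Nat.sInf_le hℓ) hℓle
      · obtain ⟨i, hi⟩ := Hfresh x h
        obtain ⟨ℓ, hℓ, hℓle⟩ := occ_of_take i k hi
        exact le_trans (Nat.sInf_le hℓ) (by omega)
    omega
end

section
/- Let d ≥ 3, k ∈ ℕ, let v be a multiple of d with v' = v/d, and suppose there is a (v,k,2) covering design with d blocks admitting a multi-matching (subsets U_i ⊆ B_i of size v' partitioning [v]). Then for every n ≥ 1 the replicated construction — sequences s_i = (A_i, U_i^1,...,U_i^n, R_i^n,...,R_i^1), where B^1,...,B^n are n disjoint copies of the covering design, R_i^j = B_i^j \ U_i^j, and A_i is a set of m = nk−(n−1)v' fresh elements per sequence — is a (d, (nk+v')d, 3nk−(2n−3)v') prefix covering design. -/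
open scoped BigOperators

section PCDHelpers

variable {β : Type*} {γ : Type*}

lemma flatten_take_prefix (L : List (List β)) (t : ℕ) :
    (L.take t).flatten <+: L.flatten :=
  ⟨(L.drop t).flatten, by rw [← List.flatten_append, List.take_append_drop]⟩

lemma prefix_mid (A Uf Rf Tf Df : List β) (h : Tf ++ Df = Uf) :
    (A ++ Tf) <+: (A ++ Uf ++ Rf) :=
  ⟨Df ++ Rf, by rw [← h]; simp [List.append_assoc]⟩

lemma prefix_right (A Uf Rf Tf Df : List β) (h : Tf ++ Df = Rf) :
    (A ++ Uf ++ Tf) <+: (A ++ Uf ++ Rf) :=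
  ⟨Df, by rw [← h]; simp [List.append_assoc]⟩

lemma mem_take_of_prefix {l p : List β} {x : β} (h : p <+: l) (hx : x ∈ p)
    {ℓ : ℕ} (hℓ : p.length ≤ ℓ) : x ∈ l.take ℓ := by
  obtain ⟨q, rfl⟩ := h
  rw [show ℓ = p.length + (ℓ - p.length) from by omega, List.take_append]
  exact List.mem_append_left _ (by rw [List.take_of_length_le (by omega)]; exact hx)

lemma mem_take_getElem? {l : List β} {x : β} {ℓ : ℕ} (h : x ∈ l.take ℓ) :
    ∃ p, p + 1 ≤ ℓ ∧ l[p]? = some x := by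
  obtain ⟨p, hp, he⟩ := List.mem_iff_getElem.1 h
  rw [List.length_take, lt_inf_iff] at hp
  refine ⟨p, by omega, ?_⟩
  have h2 : l[p] = x := by rw [← he]; exact List.getElem_take.symm
  rw [List.getElem?_eq_getElem hp.2, h2]

lemma chunk_mem_take {n : ℕ} (F : Fin n → List γ) (t : ℕ) (j : Fin n) (hj : j.1 < t) :
    F j ∈ (List.ofFn F).take t := by
  have hidx : j.1 < ((List.ofFn F).take t).length := by
    rw [List.length_take, List.length_ofFn, lt_inf_iff]; exact ⟨hj, j.isLt⟩
  refine List.mem_iff_getElem.2 ⟨j.1, hidx, ?_⟩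
  rw [List.getElem_take, List.getElem_ofFn]

lemma chunk_mem_reverse_take {n : ℕ} (F : Fin n → List γ) (t : ℕ) (j : Fin n)
    (hj : n - t ≤ j.1) : F j ∈ (List.ofFn F).reverse.take t := by
  have hjn := j.isLt
  have hidx : n - 1 - j.1 < ((List.ofFn F).reverse.take t).length := by
    rw [List.length_take, List.length_reverse, List.length_ofFn, lt_inf_iff]
    exact ⟨by omega, by omega⟩
  refine List.mem_iff_getElem.2 ⟨n - 1 - j.1, hidx, ?_⟩
  rw [List.getElem_take, List.getElem_reverse, List.getElem_ofFn]
  refine congrArg F (Fin.ext ?_)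
  show (List.ofFn F).length - 1 - (n - 1 - j.1) = j.1
  rw [List.length_ofFn]
  omega

lemma mem_reverse_drop {n : ℕ} (F : Fin n → List γ) (t : ℕ) {l : List γ}
    (hl : l ∈ (List.ofFn F).reverse.drop t) : ∃ j : Fin n, j.1 < n - t ∧ l = F j := by
  obtain ⟨r, hr, he⟩ := List.mem_iff_getElem.1 hl
  have hr' : r < n - t := by
    rw [List.length_drop, List.length_reverse, List.length_ofFn] at hr
    exact hr
  rw [List.getElem_drop, List.getElem_reverse, List.getElem_ofFn] at he
  refine ⟨_, ?_, he.symm⟩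
  show (List.ofFn F).length - 1 - (t + r) < n - t
  rw [List.length_ofFn]
  omega

lemma build3v {d K α : ℕ} {s : Fin d → List (Fin K)} {a b c : Fin K}
    (i1 i2 i3 : Fin d) (ℓ1 ℓ2 ℓ3 : ℕ) (hsum : ℓ1 + ℓ2 + ℓ3 ≤ α)
    (ha : a ∈ (s i1).take ℓ1 ∨ a ∈ (s i2).take ℓ2 ∨ a ∈ (s i3).take ℓ3)
    (hb : b ∈ (s i1).take ℓ1 ∨ b ∈ (s i2).take ℓ2 ∨ b ∈ (s i3).take ℓ3)
    (hc : c ∈ (s i1).take ℓ1 ∨ c ∈ (s i2).take ℓ2 ∨ c ∈ (s i3).take ℓ3) :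
    ∃ (i i' i'' : Fin d) (ℓ ℓ' ℓ'' : ℕ), ℓ + ℓ' + ℓ'' ≤ α ∧
      ∀ x : Fin K, (x = a ∨ x = b ∨ x = c) →
        x ∈ (s i).take ℓ ∨ x ∈ (s i').take ℓ' ∨ x ∈ (s i'').take ℓ'' :=
  ⟨i1, i2, i3, ℓ1, ℓ2, ℓ3, hsum, by rintro x (rfl | rfl | rfl) <;> assumption⟩

end PCDHelpers

theorem main_aux (d k v v' n m α : ℕ) (hd : 3 ≤ d) (hn : 1 ≤ n) (hk : v' ≤ k)
    (hv : v = v' * d)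
    (hm : m + (n - 1) * v' = n * k)
    (hα : α + 2 * n * v' = 3 * n * k + 3 * v')
    (b : Fin d → List (Fin v))
    (hlen : ∀ i, (b i).length = k)
    (hnodup : ∀ i, (b i).Nodup)
    (hcover : ∀ x y : Fin v, x ≠ y → ∃ i, x ∈ b i ∧ y ∈ b i)
    (hpart : ∀ x : Fin v, ∃! i : Fin d, x ∈ (b i).take v')
    (N : ℕ) (hN : N = n * v + d * m)
    (g : Fin n → Fin v → Fin N) (hgval : ∀ j x, (g j x).1 = j.1 * v + x.1)
    (f : Fin d → Fin m → Fin N) (hfval : ∀ i t, (f i t).1 = n * v + (i.1 * m + t.1))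
    (s : Fin d → List (Fin N))
    (hsdef : ∀ i, s i =
      List.ofFn (f i) ++
      (List.ofFn (fun j : Fin n => ((b i).take v').map (g j))).flatten ++
      ((List.ofFn (fun j : Fin n => ((b i).drop v').map (g j))).reverse).flatten) :
    IsPCD d N α s := by
  -- the multi-matching forces `k ≥ 2 v'`
  have h2v : 2 * v' ≤ k := by
    by_cases hdeg : ∀ x : Fin v, 2 ≤ (Finset.univ.filter (fun i : Fin d => x ∈ b i)).card
    · have hsum1 : ∀ i : Fin d, (Finset.univ.filter (fun x : Fin v => x ∈ b i)).card = k := by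
        intro i
        have h1 : Finset.univ.filter (fun x : Fin v => x ∈ b i) = (b i).toFinset := by
          ext x; simp
        rw [h1, List.toFinset_card_of_nodup (hnodup i), hlen i]
      have hdc : ∑ x : Fin v, (Finset.univ.filter (fun i : Fin d => x ∈ b i)).card = d * k := by
        calc ∑ x : Fin v, (Finset.univ.filter (fun i : Fin d => x ∈ b i)).card
            = ∑ x : Fin v, ∑ i : Fin d, (if x ∈ b i then 1 else 0) := by
              refine Finset.sum_congr rfl ?_
              intro x _
              rw [Finset.card_filter]
          _ = ∑ i : Fin d, ∑ x : Fin v, (if x ∈ b i then 1 else 0) := Finset.sum_comm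
          _ = ∑ i : Fin d, (Finset.univ.filter (fun x : Fin v => x ∈ b i)).card := by
              refine Finset.sum_congr rfl ?_
              intro i _
              rw [Finset.card_filter]
          _ = ∑ _i : Fin d, k := Finset.sum_congr rfl (fun i _ => hsum1 i)
          _ = d * k := by
              rw [Finset.sum_const, Finset.card_univ, Fintype.card_fin, smul_eq_mul]
      have hge : 2 * v ≤ d * k := by
        rw [← hdc]
        calc 2 * v = ∑ _x : Fin v, 2 := by
              rw [Finset.sum_const, Finset.card_univ, Fintype.card_fin, smul_eq_mul, Nat.mul_comm]
          _ ≤ _ := Finset.sum_le_sum (fun x _ => hdeg x)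
      rw [hv] at hge
      have h6 : 2 * (v' * d) = (2 * v') * d := by ring
      have h7 : d * k = k * d := Nat.mul_comm _ _
      have h12 : (2 * v') * d ≤ k * d := by omega
      exact Nat.le_of_mul_le_mul_right h12 (by omega)
    · push_neg at hdeg
      obtain ⟨x, hx2⟩ := hdeg
      obtain ⟨i0, hi0, -⟩ := hpart x
      have hxb : x ∈ b i0 := List.mem_of_mem_take hi0
      have hall : ∀ y : Fin v, y ∈ b i0 := by
        intro y
        by_cases hxy : x = y
        · exact hxy ▸ hxb
        · obtain ⟨i, hxi, hyi⟩ := hcover x y hxy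
          have hii : i = i0 := by
            by_contra hne
            have h10 : 1 < (Finset.univ.filter (fun i : Fin d => x ∈ b i)).card :=
              Finset.one_lt_card.2 ⟨i, Finset.mem_filter.2 ⟨Finset.mem_univ _, hxi⟩,
                i0, Finset.mem_filter.2 ⟨Finset.mem_univ _, hxb⟩, hne⟩
            omega
          exact hii ▸ hyi
      have hvk : v ≤ k := by
        have hsub : (Finset.univ : Finset (Fin v)) ⊆ (b i0).toFinset :=
          fun y _ => List.mem_toFinset.2 (hall y)
        have h11 := Finset.card_le_card hsub
        rwa [Finset.card_univ, Fintype.card_fin, List.toFinset_card_of_nodup (hnodup i0),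
          hlen i0] at h11
      have h8 : v' * 3 ≤ v' * d := Nat.mul_le_mul_left v' hd
      have h9 : v' * 3 = 3 * v' := by ring
      omega
  have hk2 : v' ≤ k - v' := by omega
  have hmval : m = n * (k - v') + v' := by
    have a1 : n * k = n * (k - v') + n * v' := by rw [← Nat.mul_add, Nat.sub_add_cancel hk]
    have a2 : n * v' = (n - 1) * v' + v' := by
      conv_lhs => rw [show n = (n - 1) + 1 from by omega]
      rw [Nat.succ_mul]
    omega
  have hαval : α = 3 * m + n * v' := by
    have a2 : n * v' = (n - 1) * v' + v' := by
      conv_lhs => rw [show n = (n - 1) + 1 from by omega]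
      rw [Nat.succ_mul]
    have a3 : 3 * n * k = 3 * (n * k) := by ring
    have a4 : 2 * n * v' = 2 * (n * v') := by ring
    omega
  -- chunk lengths
  have hUchunk : ∀ i : Fin d, ∀ l ∈ (List.ofFn fun j : Fin n => ((b i).take v').map (g j)),
      l.length = v' := by
    intro i l hl
    obtain ⟨j, rfl⟩ := List.mem_ofFn.1 hl
    rw [List.length_map, List.length_take, hlen i]
    exact inf_eq_left.mpr hk
  have hRchunk : ∀ i : Fin d, ∀ l ∈ (List.ofFn fun j : Fin n => ((b i).drop v').map (g j)),
      l.length = k - v' := by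
    intro i l hl
    obtain ⟨j, rfl⟩ := List.mem_ofFn.1 hl
    rw [List.length_map, List.length_drop, hlen i]
  have hflatlen : ∀ (L : List (List (Fin N))) (c t : ℕ), t ≤ L.length →
      (∀ l ∈ L, l.length = c) → ((L.take t).flatten).length = t * c := by
    intro L c t ht hc
    rw [List.length_flatten]
    have h1 : List.map List.length (L.take t) = List.replicate t c := by
      refine List.eq_replicate_iff.2 ⟨?_, ?_⟩
      · rw [List.length_map, List.length_take]; exact inf_eq_left.mpr ht
      · intro a ha
        obtain ⟨l, hl, rfl⟩ := List.mem_map.1 ha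
        exact hc l (List.mem_of_mem_take hl)
    rw [h1, List.sum_replicate, smul_eq_mul]
  have hUflen : ∀ i : Fin d,
      ((List.ofFn fun j : Fin n => ((b i).take v').map (g j)).flatten).length = n * v' := by
    intro i
    rw [List.length_flatten, List.map_ofFn]
    have h1 : (List.length ∘ fun j : Fin n => ((b i).take v').map (g j)) =
        fun _ : Fin n => v' := by
      funext j
      show (((b i).take v').map (g j)).length = v'
      rw [List.length_map, List.length_take, hlen i]
      exact inf_eq_left.mpr hk
    rw [h1, List.ofFn_const, List.sum_replicate, smul_eq_mul]
  -- basic prefixes and covers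
  have hprefA : ∀ i : Fin d, List.ofFn (f i) <+: s i := by
    intro i
    rw [hsdef i]
    exact (List.prefix_append _ _).trans (List.prefix_append _ _)
  have hcovF : ∀ (i : Fin d) (t : Fin m), f i t ∈ (s i).take m := by
    intro i t
    refine mem_take_of_prefix (hprefA i) ?_ (by simp)
    exact List.mem_ofFn.2 ⟨t, rfl⟩
  have hcovU : ∀ (i : Fin d) (j : Fin n) (x : Fin v), x ∈ (b i).take v' →
      g j x ∈ (s i).take (m + (j.1 + 1) * v') := by
    intro i j x hx
    have hfl : ((List.ofFn fun j' : Fin n => ((b i).take v').map (g j')).take (j.1+1)).flatten ++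
        ((List.ofFn fun j' : Fin n => ((b i).take v').map (g j')).drop (j.1+1)).flatten =
        (List.ofFn fun j' : Fin n => ((b i).take v').map (g j')).flatten := by
      rw [← List.flatten_append, List.take_append_drop]
    have hpre : (List.ofFn (f i) ++
        ((List.ofFn fun j' : Fin n => ((b i).take v').map (g j')).take (j.1+1)).flatten)
        <+: s i := by
      rw [hsdef i]; exact prefix_mid _ _ _ _ _ hfl
    have hmem : g j x ∈ List.ofFn (f i) ++
        ((List.ofFn fun j' : Fin n => ((b i).take v').map (g j')).take (j.1+1)).flatten := by
      refine List.mem_append_right _ (List.mem_flatten.2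
        ⟨((b i).take v').map (g j), ?_, List.mem_map_of_mem hx⟩)
      exact chunk_mem_take (fun j' : Fin n => ((b i).take v').map (g j')) (j.1+1) j (by omega)
    have hlenP : (List.ofFn (f i) ++
        ((List.ofFn fun j' : Fin n => ((b i).take v').map (g j')).take (j.1+1)).flatten).length
        = m + (j.1 + 1) * v' := by
      rw [List.length_append, List.length_ofFn,
        hflatlen _ v' (j.1+1) (by rw [List.length_ofFn]; exact j.isLt) (hUchunk i)]
    exact mem_take_of_prefix hpre hmem (le_of_eq hlenP)
  have hRrevlen : ∀ (i : Fin d) (J : ℕ), J ≤ n →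
      ((((List.ofFn fun j' : Fin n => ((b i).drop v').map (g j')).reverse).take (n-J)).flatten).length
      = (n - J) * (k - v') := by
    intro i J hJn
    exact hflatlen _ (k - v') (n-J) (by rw [List.length_reverse, List.length_ofFn]; omega)
      (fun l hl => hRchunk i l (List.mem_reverse.1 hl))
  have hcovR : ∀ (i : Fin d) (J : ℕ), J ≤ n → ∀ (j : Fin n) (x : Fin v), J ≤ j.1 → x ∈ b i →
      g j x ∈ (s i).take (m + n * v' + (n - J) * (k - v')) := by
    intro i J hJn j x hJj hx
    have hfl : (((List.ofFn fun j' : Fin n => ((b i).drop v').map (g j')).reverse).take (n-J)).flatten ++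
        (((List.ofFn fun j' : Fin n => ((b i).drop v').map (g j')).reverse).drop (n-J)).flatten =
        ((List.ofFn fun j' : Fin n => ((b i).drop v').map (g j')).reverse).flatten := by
      rw [← List.flatten_append, List.take_append_drop]
    have hpre : (List.ofFn (f i) ++
        (List.ofFn fun j' : Fin n => ((b i).take v').map (g j')).flatten ++
        (((List.ofFn fun j' : Fin n => ((b i).drop v').map (g j')).reverse).take (n-J)).flatten)
        <+: s i := by
      rw [hsdef i]; exact prefix_right _ _ _ _ _ hfl
    have hxsplit : x ∈ (b i).take v' ∨ x ∈ (b i).drop v' := by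
      have h1 : x ∈ (b i).take v' ++ (b i).drop v' := by rwa [List.take_append_drop]
      exact List.mem_append.1 h1
    have hmem : g j x ∈ List.ofFn (f i) ++
        (List.ofFn fun j' : Fin n => ((b i).take v').map (g j')).flatten ++
        (((List.ofFn fun j' : Fin n => ((b i).drop v').map (g j')).reverse).take (n-J)).flatten := by
      rcases hxsplit with hxt | hxd
      · refine List.mem_append_left _ (List.mem_append_right _ ?_)
        exact List.mem_flatten.2 ⟨((b i).take v').map (g j),
          List.mem_ofFn.2 ⟨j, rfl⟩, List.mem_map_of_mem hxt⟩
      · refine List.mem_append_right _ ?_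
        refine List.mem_flatten.2 ⟨((b i).drop v').map (g j), ?_, List.mem_map_of_mem hxd⟩
        exact chunk_mem_reverse_take (fun j' : Fin n => ((b i).drop v').map (g j')) (n-J) j
          (by have := j.isLt; omega)
    have hlenP : (List.ofFn (f i) ++
        (List.ofFn fun j' : Fin n => ((b i).take v').map (g j')).flatten ++
        (((List.ofFn fun j' : Fin n => ((b i).drop v').map (g j')).reverse).take (n-J)).flatten).length
        = m + n * v' + (n - J) * (k - v') := by
      rw [List.length_append, List.length_append, List.length_ofFn, hUflen i, hRrevlen i J hJn]
    exact mem_take_of_prefix hpre hmem (le_of_eq hlenP)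
  -- injectivity of the copy encoding
  have hginj : ∀ (j j' : Fin n) (x x' : Fin v), g j x = g j' x' → j.1 = j'.1 ∧ x.1 = x'.1 := by
    intro j j' x x' h
    have h1 : j.1 * v + x.1 = j'.1 * v + x'.1 := by rw [← hgval j x, ← hgval j' x', h]
    have hx := x.isLt
    have hx' := x'.isLt
    have hj : j.1 = j'.1 := by
      rcases Nat.lt_trichotomy j.1 j'.1 with h2 | h2 | h2
      · exfalso
        have h3 : (j.1 + 1) * v ≤ j'.1 * v := Nat.mul_le_mul h2 le_rfl
        have h4 : (j.1 + 1) * v = j.1 * v + v := Nat.succ_mul _ _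
        omega
      · exact h2
      · exfalso
        have h3 : (j'.1 + 1) * v ≤ j.1 * v := Nat.mul_le_mul h2 le_rfl
        have h4 : (j'.1 + 1) * v = j'.1 * v + v := Nat.succ_mul _ _
        omega
    have h5 : j.1 * v = j'.1 * v := by rw [hj]
    exact ⟨hj, by omega⟩
  -- decoding elements
  have hdecode : ∀ e : Fin N, (∃ (j : Fin n) (x : Fin v), e = g j x) ∨ n * v ≤ e.1 := by
    intro e
    by_cases hel : e.1 < n * v
    · left
      have hv0 : 0 < v := by
        rcases Nat.eq_zero_or_pos v with h0 | h0
        · rw [h0, Nat.mul_zero] at hel; omega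
        · exact h0
      refine ⟨⟨e.1 / v, (Nat.div_lt_iff_lt_mul hv0).2 hel⟩, ⟨e.1 % v, Nat.mod_lt _ hv0⟩, ?_⟩
      apply Fin.ext
      rw [hgval]
      show e.1 = e.1 / v * v + e.1 % v
      rw [Nat.div_add_mod']
    · right; omega
  have hcovF' : ∀ e : Fin N, n * v ≤ e.1 → ∃ i : Fin d, e ∈ (s i).take m := by
    intro e he
    have heN : e.1 < n * v + d * m := by have := e.isLt; omega
    have hm0 : 0 < m := by
      rcases Nat.eq_zero_or_pos m with h0 | h0
      · rw [h0, Nat.mul_zero] at heN; omega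
      · exact h0
    have hlt : e.1 - n * v < d * m := by omega
    refine ⟨⟨(e.1 - n * v) / m, (Nat.div_lt_iff_lt_mul hm0).2 hlt⟩, ?_⟩
    have heq : e = f ⟨(e.1 - n * v) / m, (Nat.div_lt_iff_lt_mul hm0).2 hlt⟩
        ⟨(e.1 - n * v) % m, Nat.mod_lt _ hm0⟩ := by
      apply Fin.ext
      rw [hfval]
      show e.1 = n * v + ((e.1 - n * v) / m * m + (e.1 - n * v) % m)
      rw [Nat.div_add_mod']
      omega
    have hc := hcovF ⟨(e.1 - n * v) / m, (Nat.div_lt_iff_lt_mul hm0).2 hlt⟩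
      ⟨(e.1 - n * v) % m, Nat.mod_lt _ hm0⟩
    rwa [← heq] at hc
  have hcovC : ∀ (j : Fin n) (x : Fin v),
      ∃ i : Fin d, g j x ∈ (s i).take (m + (j.1 + 1) * v') := by
    intro j x
    obtain ⟨i0, hi0, -⟩ := hpart x
    exact ⟨i0, hcovU i0 j x hi0⟩
  have hcovJ : ∀ (j j' : Fin n) (x x' : Fin v), j.1 ≤ j'.1 →
      ∃ i : Fin d, g j x ∈ (s i).take (m + n * v' + (n - j.1) * (k - v')) ∧
        g j' x' ∈ (s i).take (m + n * v' + (n - j.1) * (k - v')) := by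
    intro j j' x x' hjj
    have hJn : j.1 ≤ n := le_of_lt j.isLt
    by_cases hxx : x = x'
    · subst hxx
      obtain ⟨i0, hi0, -⟩ := hpart x
      have hxb : x ∈ b i0 := List.mem_of_mem_take hi0
      exact ⟨i0, hcovR i0 j.1 hJn j x le_rfl hxb, hcovR i0 j.1 hJn j' x hjj hxb⟩
    · obtain ⟨i, hxi, hx'i⟩ := hcover x x' hxx
      exact ⟨i, hcovR i j.1 hJn j x le_rfl hxi, hcovR i j.1 hJn j' x' hjj hx'i⟩
  -- occurrence upper bounds
  have occ_f : ∀ (i : Fin d) (p : ℕ) (e : Fin N), (s i)[p]? = some e → n * v ≤ e.1 → p < m := by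
    intro i p e hp he
    by_contra hge
    push_neg at hge
    have hdropeq : (s i).drop m =
        (List.ofFn fun j' : Fin n => ((b i).take v').map (g j')).flatten ++
        ((List.ofFn fun j' : Fin n => ((b i).drop v').map (g j')).reverse).flatten := by
      rw [hsdef i, List.append_assoc]
      exact List.drop_left' List.length_ofFn
    have h2 : ((s i).drop m)[p - m]? = some e := by
      rw [List.getElem?_drop, show m + (p - m) = p from by omega]
      exact hp
    rw [hdropeq] at h2
    have hmem := List.mem_of_getElem? h2
    have hform : ∃ (j : Fin n) (x : Fin v), e = g j x := by
      rcases List.mem_append.1 hmem with hU | hR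
      · obtain ⟨l, hl, hyl⟩ := List.mem_flatten.1 hU
        obtain ⟨j, rfl⟩ := List.mem_ofFn.1 hl
        obtain ⟨x, -, hgx⟩ := List.mem_map.1 hyl
        exact ⟨j, x, hgx.symm⟩
      · obtain ⟨l, hl, hyl⟩ := List.mem_flatten.1 hR
        obtain ⟨j, rfl⟩ := List.mem_ofFn.1 (List.mem_reverse.1 hl)
        obtain ⟨x, -, hgx⟩ := List.mem_map.1 hyl
        exact ⟨j, x, hgx.symm⟩
    obtain ⟨j, x, rfl⟩ := hform
    rw [hgval] at he
    have h3 : (j.1 + 1) * v ≤ n * v := Nat.mul_le_mul j.isLt le_rfl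
    have h4 : (j.1 + 1) * v = j.1 * v + v := Nat.succ_mul _ _
    have h5 := x.isLt
    omega
  have occ_g : ∀ (i : Fin d) (p : ℕ) (j : Fin n) (x : Fin v),
      (s i)[p]? = some (g j x) → p < m + n * v' + (n - j.1) * (k - v') := by
    intro i p j x hp
    by_contra hge
    push_neg at hge
    have hJn : j.1 ≤ n := le_of_lt j.isLt
    have hfl : (((List.ofFn fun j' : Fin n => ((b i).drop v').map (g j')).reverse).take (n-j.1)).flatten ++
        (((List.ofFn fun j' : Fin n => ((b i).drop v').map (g j')).reverse).drop (n-j.1)).flatten =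
        ((List.ofFn fun j' : Fin n => ((b i).drop v').map (g j')).reverse).flatten := by
      rw [← List.flatten_append, List.take_append_drop]
    have hseq : s i = (List.ofFn (f i) ++
        (List.ofFn fun j' : Fin n => ((b i).take v').map (g j')).flatten ++
        (((List.ofFn fun j' : Fin n => ((b i).drop v').map (g j')).reverse).take (n-j.1)).flatten) ++
        (((List.ofFn fun j' : Fin n => ((b i).drop v').map (g j')).reverse).drop (n-j.1)).flatten := by
      rw [hsdef i, ← hfl]
      simp [List.append_assoc]
    have hlenP : (List.ofFn (f i) ++
        (List.ofFn fun j' : Fin n => ((b i).take v').map (g j')).flatten ++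
        (((List.ofFn fun j' : Fin n => ((b i).drop v').map (g j')).reverse).take (n-j.1)).flatten).length
        = m + n * v' + (n - j.1) * (k - v') := by
      rw [List.length_append, List.length_append, List.length_ofFn, hUflen i, hRrevlen i j.1 hJn]
    have hdropeq : (s i).drop (m + n * v' + (n - j.1) * (k - v')) =
        (((List.ofFn fun j' : Fin n => ((b i).drop v').map (g j')).reverse).drop (n-j.1)).flatten := by
      rw [hseq]
      exact List.drop_left' hlenP
    have h2 : ((s i).drop (m + n * v' + (n - j.1) * (k - v')))[p - (m + n * v' + (n - j.1) * (k - v'))]?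
        = some (g j x) := by
      rw [List.getElem?_drop,
        show m + n * v' + (n - j.1) * (k - v') + (p - (m + n * v' + (n - j.1) * (k - v'))) = p
          from by omega]
      exact hp
    rw [hdropeq] at h2
    have hmem := List.mem_of_getElem? h2
    obtain ⟨l, hl, hyl⟩ := List.mem_flatten.1 hmem
    obtain ⟨j', hj', rfl⟩ := mem_reverse_drop _ _ hl
    obtain ⟨x', hx', hgx⟩ := List.mem_map.1 hyl
    have hj2 := (hginj _ _ _ _ hgx).1
    have hjn := j.isLt
    omega
  -- singleton condition
  have singleton : SingletonCond d N α s := by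
    intro e _
    unfold lMin lMax
    rcases hdecode e with ⟨j, x, rfl⟩ | hf
    · have hjn := j.isLt
      have hmax : sSup {ℓ | OccursAt s (g j x) ℓ} ≤ m + n * v' + (n - j.1) * (k - v') := by
        rcases Set.eq_empty_or_nonempty {ℓ | OccursAt s (g j x) ℓ} with hS | hS
        · rw [hS, csSup_empty]; exact bot_le
        · refine csSup_le hS ?_
          rintro ℓ ⟨hl1, i, hi⟩
          have := occ_g i (ℓ - 1) j x hi
          omega
      have hmin : sInf {ℓ | OccursAt s (g j x) ℓ} ≤ m + (j.1 + 1) * v' := by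
        obtain ⟨i0, hi0, -⟩ := hpart x
        obtain ⟨p, hp, hpe⟩ := mem_take_getElem? (hcovU i0 j x hi0)
        have hocc : OccursAt s (g j x) (p + 1) := ⟨by omega, i0, by simpa using hpe⟩
        exact le_trans (Nat.sInf_le hocc) hp
      have e1 : (j.1 + 1) * v' = j.1 * v' + v' := Nat.succ_mul _ _
      have e2 : j.1 * v' ≤ j.1 * (k - v') := Nat.mul_le_mul le_rfl hk2
      have e3 : (n - j.1) * (k - v') + j.1 * (k - v') = n * (k - v') := by
        rw [← Nat.add_mul, show n - j.1 + j.1 = n from by omega]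
      omega
    · have hub : ∀ ℓ ∈ {ℓ | OccursAt s e ℓ}, ℓ ≤ m := by
        rintro ℓ ⟨hl1, i, hi⟩
        have := occ_f i (ℓ - 1) e hi hf
        omega
      have hmax : sSup {ℓ | OccursAt s e ℓ} ≤ m := by
        rcases Set.eq_empty_or_nonempty {ℓ | OccursAt s e ℓ} with hS | hS
        · rw [hS, csSup_empty]; exact bot_le
        · exact csSup_le hS hub
      have hmin : sInf {ℓ | OccursAt s e ℓ} ≤ m := by
        rcases Set.eq_empty_or_nonempty {ℓ | OccursAt s e ℓ} with hS | hS
        · rw [hS, Nat.sInf_empty]; exact Nat.zero_le m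
        · exact hub _ (Nat.sInf_mem hS)
      omega
  -- triplet condition
  have triplet : TripletCond d N α s := by
    have keyarith0 : m + m + m ≤ α := by omega
    have keyarith1 : ∀ js : ℕ, js < n → m + m + (m + (js + 1) * v') ≤ α := by
      intro js h
      have e5 : (js + 1) * v' ≤ n * v' := Nat.mul_le_mul (by omega) le_rfl
      omega
    have keyarith2 : ∀ jp : ℕ, jp < n → m + (m + n * v' + (n - jp) * (k - v')) + 0 ≤ α := by
      intro jp h
      have e3 : (n - jp) * (k - v') + jp * (k - v') = n * (k - v') := by
        rw [← Nat.add_mul, show n - jp + jp = n from by omega]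
      omega
    have keyarith3 : ∀ js jp : ℕ, js ≤ jp → jp < n →
        m + (js + 1) * v' + (m + n * v' + (n - jp) * (k - v')) + 0 ≤ α := by
      intro js jp h1 h2
      have e1 : (js + 1) * v' = js * v' + v' := Nat.succ_mul _ _
      have e2 : js * v' ≤ jp * (k - v') := Nat.mul_le_mul h1 hk2
      have e3 : (n - jp) * (k - v') + jp * (k - v') = n * (k - v') := by
        rw [← Nat.add_mul, show n - jp + jp = n from by omega]
      omega
    intro e1 e2 e3 _ _ _
    rcases hdecode e1 with ⟨j1, x1, rfl⟩ | hf1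
    · rcases hdecode e2 with ⟨j2, x2, rfl⟩ | hf2
      · rcases hdecode e3 with ⟨j3, x3, rfl⟩ | hf3
        · -- all three copies
          rcases le_total j1.1 j2.1 with h12 | h12
          · rcases le_total j1.1 j3.1 with h13 | h13
            · rcases le_total j2.1 j3.1 with hp | hp
              · obtain ⟨i, hA, hB⟩ := hcovJ j2 j3 x2 x3 hp
                obtain ⟨i0, hC⟩ := hcovC j1 x1
                exact build3v i0 i i _ _ 0 (keyarith3 j1.1 j2.1 h12 j2.isLt)
                  (Or.inl hC) (Or.inr (Or.inl hA)) (Or.inr (Or.inl hB))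
              · obtain ⟨i, hA, hB⟩ := hcovJ j3 j2 x3 x2 hp
                obtain ⟨i0, hC⟩ := hcovC j1 x1
                exact build3v i0 i i _ _ 0 (keyarith3 j1.1 j3.1 h13 j3.isLt)
                  (Or.inl hC) (Or.inr (Or.inl hB)) (Or.inr (Or.inl hA))
            · obtain ⟨i, hA, hB⟩ := hcovJ j1 j2 x1 x2 h12
              obtain ⟨i0, hC⟩ := hcovC j3 x3
              exact build3v i0 i i _ _ 0 (keyarith3 j3.1 j1.1 h13 j1.isLt)
                (Or.inr (Or.inl hA)) (Or.inr (Or.inl hB)) (Or.inl hC)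
          · rcases le_total j2.1 j3.1 with h23 | h23
            · rcases le_total j1.1 j3.1 with hp | hp
              · obtain ⟨i, hA, hB⟩ := hcovJ j1 j3 x1 x3 hp
                obtain ⟨i0, hC⟩ := hcovC j2 x2
                exact build3v i0 i i _ _ 0 (keyarith3 j2.1 j1.1 h12 j1.isLt)
                  (Or.inr (Or.inl hA)) (Or.inl hC) (Or.inr (Or.inl hB))
              · obtain ⟨i, hA, hB⟩ := hcovJ j3 j1 x3 x1 hp
                obtain ⟨i0, hC⟩ := hcovC j2 x2
                exact build3v i0 i i _ _ 0 (keyarith3 j2.1 j3.1 h23 j3.isLt)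
                  (Or.inr (Or.inl hB)) (Or.inl hC) (Or.inr (Or.inl hA))
            · obtain ⟨i, hA, hB⟩ := hcovJ j2 j1 x2 x1 h12
              obtain ⟨i0, hC⟩ := hcovC j3 x3
              exact build3v i0 i i _ _ 0 (keyarith3 j3.1 j2.1 h23 j2.isLt)
                (Or.inr (Or.inl hB)) (Or.inr (Or.inl hA)) (Or.inl hC)
        · -- e1, e2 copies; e3 fresh
          rcases le_total j1.1 j2.1 with hp | hp
          · obtain ⟨i, hA, hB⟩ := hcovJ j1 j2 x1 x2 hp
            obtain ⟨iF, hF⟩ := hcovF' e3 hf3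
            exact build3v iF i i m _ 0 (keyarith2 j1.1 j1.isLt)
              (Or.inr (Or.inl hA)) (Or.inr (Or.inl hB)) (Or.inl hF)
          · obtain ⟨i, hA, hB⟩ := hcovJ j2 j1 x2 x1 hp
            obtain ⟨iF, hF⟩ := hcovF' e3 hf3
            exact build3v iF i i m _ 0 (keyarith2 j2.1 j2.isLt)
              (Or.inr (Or.inl hB)) (Or.inr (Or.inl hA)) (Or.inl hF)
      · rcases hdecode e3 with ⟨j3, x3, rfl⟩ | hf3
        · -- e1, e3 copies; e2 fresh
          rcases le_total j1.1 j3.1 with hp | hp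
          · obtain ⟨i, hA, hB⟩ := hcovJ j1 j3 x1 x3 hp
            obtain ⟨iF, hF⟩ := hcovF' e2 hf2
            exact build3v iF i i m _ 0 (keyarith2 j1.1 j1.isLt)
              (Or.inr (Or.inl hA)) (Or.inl hF) (Or.inr (Or.inl hB))
          · obtain ⟨i, hA, hB⟩ := hcovJ j3 j1 x3 x1 hp
            obtain ⟨iF, hF⟩ := hcovF' e2 hf2
            exact build3v iF i i m _ 0 (keyarith2 j3.1 j3.isLt)
              (Or.inr (Or.inl hB)) (Or.inl hF) (Or.inr (Or.inl hA))
        · -- only e1 copy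
          obtain ⟨i0, hC⟩ := hcovC j1 x1
          obtain ⟨iF2, hF2⟩ := hcovF' e2 hf2
          obtain ⟨iF3, hF3⟩ := hcovF' e3 hf3
          exact build3v iF2 iF3 i0 m m _ (keyarith1 j1.1 j1.isLt)
            (Or.inr (Or.inr hC)) (Or.inl hF2) (Or.inr (Or.inl hF3))
    · rcases hdecode e2 with ⟨j2, x2, rfl⟩ | hf2
      · rcases hdecode e3 with ⟨j3, x3, rfl⟩ | hf3
        · -- e2, e3 copies; e1 fresh
          rcases le_total j2.1 j3.1 with hp | hp
          · obtain ⟨i, hA, hB⟩ := hcovJ j2 j3 x2 x3 hp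
            obtain ⟨iF, hF⟩ := hcovF' e1 hf1
            exact build3v iF i i m _ 0 (keyarith2 j2.1 j2.isLt)
              (Or.inl hF) (Or.inr (Or.inl hA)) (Or.inr (Or.inl hB))
          · obtain ⟨i, hA, hB⟩ := hcovJ j3 j2 x3 x2 hp
            obtain ⟨iF, hF⟩ := hcovF' e1 hf1
            exact build3v iF i i m _ 0 (keyarith2 j3.1 j3.isLt)
              (Or.inl hF) (Or.inr (Or.inl hB)) (Or.inr (Or.inl hA))
        · -- only e2 copy
          obtain ⟨i0, hC⟩ := hcovC j2 x2
          obtain ⟨iF1, hF1⟩ := hcovF' e1 hf1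
          obtain ⟨iF3, hF3⟩ := hcovF' e3 hf3
          exact build3v iF1 iF3 i0 m m _ (keyarith1 j2.1 j2.isLt)
            (Or.inl hF1) (Or.inr (Or.inr hC)) (Or.inr (Or.inl hF3))
      · rcases hdecode e3 with ⟨j3, x3, rfl⟩ | hf3
        · -- only e3 copy
          obtain ⟨i0, hC⟩ := hcovC j3 x3
          obtain ⟨iF1, hF1⟩ := hcovF' e1 hf1
          obtain ⟨iF2, hF2⟩ := hcovF' e2 hf2
          exact build3v iF1 iF2 i0 m m _ (keyarith1 j3.1 j3.isLt)
            (Or.inl hF1) (Or.inr (Or.inl hF2)) (Or.inr (Or.inr hC))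
        · -- all fresh
          obtain ⟨iF1, hF1⟩ := hcovF' e1 hf1
          obtain ⟨iF2, hF2⟩ := hcovF' e2 hf2
          obtain ⟨iF3, hF3⟩ := hcovF' e3 hf3
          exact build3v iF1 iF2 iF3 m m m keyarith0
            (Or.inl hF1) (Or.inr (Or.inl hF2)) (Or.inr (Or.inr hF3))
  exact ⟨triplet, singleton⟩

theorem stmt_6 (d k v v' n m α : ℕ) (hd : 3 ≤ d) (hn : 1 ≤ n) (hk : v' ≤ k)
    (hv : v = v' * d)
    (hm : m + (n - 1) * v' = n * k)
    (hα : α + 2 * n * v' = 3 * n * k + 3 * v')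
    (b : Fin d → List (Fin v))
    (hlen : ∀ i, (b i).length = k)
    (hnodup : ∀ i, (b i).Nodup)
    (hcover : ∀ x y : Fin v, x ≠ y → ∃ i, x ∈ b i ∧ y ∈ b i)
    (hpart : ∀ x : Fin v, ∃! i : Fin d, x ∈ (b i).take v') :
    IsPCD d (n * v + d * m) α
      (fun i =>
        List.ofFn (fun t : Fin m => pcdElem (n * v) d m (n * v + d * m) le_rfl i t) ++
        (List.ofFn (fun j : Fin n =>
          ((b i).take v').map (fun x => pcdElem 0 n v (n * v + d * m) (by simp) j x))).flatten ++
        ((List.ofFn (fun j : Fin n =>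
          ((b i).drop v').map (fun x => pcdElem 0 n v (n * v + d * m) (by simp) j x))).reverse).flatten) := by
  exact main_aux d k v v' n m α hd hn hk hv hm hα b hlen hnodup hcover hpart
    (n * v + d * m) rfl
    (fun j x => pcdElem 0 n v (n * v + d * m) (by simp) j x)
    (fun j x => by simp [pcdElem])
    (fun i t => pcdElem (n * v) d m (n * v + d * m) le_rfl i t)
    (fun i t => by simp [pcdElem])
    _ (fun i => rfl)
end

section
/- Define γ_d = sup{ K/α : there exists a (d,K,α) prefix covering design }. If for every d ≥ 3 and multiple v of d there exists a (v,k,2) covering design with d blocks admitting a multi-matching, then γ_d ≥ d/(3 − 2v/(kd)). (In particular, the existence of the replicated prefix covering designs with parameters K=(nk+v')d and α ≤ 3nk−(2n−3)v' for all n implies that the supremum γ_d is at least the limit d/(3 − 2v'/k) as n → ∞.) -/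
open scoped BigOperators

namespace Stmt7

def rep (g : ℕ → List ℕ) : ℕ → List ℕ
  | 0 => []
  | n+1 => rep g n ++ g n

lemma length_rep (g : ℕ → List ℕ) (c : ℕ) : ∀ n, (∀ j, j < n → (g j).length = c) →
    (rep g n).length = n * c
  | 0, _ => by simp [rep]
  | (n+1), h => by
    have ih := length_rep g c n (fun j hj => h j (by omega))
    simp only [rep, List.length_append, ih, h n (by omega)]
    ring

lemma mem_rep {g : ℕ → List ℕ} {x : ℕ} : ∀ {n}, x ∈ rep g n → ∃ r, r < n ∧ x ∈ g r
  | 0, h => absurd h (by simp [rep])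
  | (n+1), h => by
    rcases List.mem_append.1 h with h | h
    · obtain ⟨r, hr, hx⟩ := mem_rep h
      exact ⟨r, by omega, hx⟩
    · exact ⟨n, by omega, h⟩

lemma mem_take_mono {α : Type*} {x : α} {l : List α} {m n : ℕ} (h : x ∈ l.take m) (hmn : m ≤ n) :
    x ∈ l.take n := by
  have h2 : l.take m = (l.take n).take m := by
    rw [List.take_take, min_eq_left hmn]
  exact List.take_subset _ _ (h2 ▸ h)

lemma mem_take_append_left {α : Type*} {x : α} {l1 l2 : List α} {n : ℕ} (h : x ∈ l1.take n) :
    x ∈ (l1 ++ l2).take n := by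
  rw [List.take_append]
  exact List.mem_append_left _ h

lemma mem_take_append_right {α : Type*} {x : α} {l1 l2 : List α} {n : ℕ} (h : x ∈ l2.take (n - l1.length)) :
    x ∈ (l1 ++ l2).take n := by
  rw [List.take_append]
  exact List.mem_append_right _ h

lemma rep_take {g : ℕ → List ℕ} {c x : ℕ} : ∀ {n r}, (∀ j, j < n → (g j).length = c) →
    r < n → x ∈ g r → x ∈ (rep g n).take ((r+1) * c)
  | 0, r, _, hr, _ => absurd hr (by omega)
  | (n+1), r, h, hr, hx => by
    rcases Nat.lt_or_ge r n with h' | h'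
    · exact mem_take_append_left (rep_take (fun j hj => h j (by omega)) h' hx)
    · have hrm : r = n := by omega
      subst hrm
      have hlen : (rep g (r+1)).length = (r+1) * c := length_rep g c (r+1) h
      rw [List.take_of_length_le (le_of_eq hlen)]
      exact List.mem_append_right _ hx

lemma rep_drop {g : ℕ → List ℕ} {c x m : ℕ} : ∀ {n}, (∀ j, j < n → (g j).length = c) →
    x ∈ (rep g n).drop (m * c) → ∃ r, m ≤ r ∧ r < n ∧ x ∈ g r
  | 0, _, hx => absurd hx (by simp [rep])
  | (n+1), h, hx => by
    rw [rep, List.drop_append] at hx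
    rcases List.mem_append.1 hx with hx | hx
    · obtain ⟨r, h1, h2, h3⟩ := rep_drop (fun j hj => h j (by omega)) hx
      exact ⟨r, h1, by omega, h3⟩
    · rcases le_or_gt m n with hmn | hmn
      · exact ⟨n, hmn, by omega, List.mem_of_mem_drop hx⟩
      · exfalso
        have hlen : (rep g n).length = n * c := length_rep g c n (fun j hj => h j (by omega))
        have hc : (g n).length = c := h n (by omega)
        have h1 : (n+1) * c ≤ m * c := Nat.mul_le_mul_right c (by omega)
        rw [add_mul, one_mul] at h1
        rw [hlen, List.drop_eq_nil_of_le (by omega)] at hx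
        simp at hx

lemma mem_drop_of_getElem? {l : List ℕ} {j n x : ℕ} (h : l[j]? = some x) (hj : n ≤ j) :
    x ∈ l.drop n := by
  have h2 : (l.drop n)[j - n]? = l[n + (j - n)]? := List.getElem?_drop
  rw [show n + (j - n) = j from by omega, h] at h2
  exact List.mem_of_getElem? h2

lemma exists_getElem?_of_mem_take {l : List ℕ} {t x : ℕ} (h : x ∈ l.take t) :
    ∃ m, m < t ∧ l[m]? = some x := by
  obtain ⟨m, hm, he⟩ := List.getElem_of_mem h
  have hm2 : m < t := by
    have : (l.take t).length = min t l.length := List.length_take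
    omega
  have hm3 : m < l.length := by
    have : (l.take t).length = min t l.length := List.length_take
    omega
  refine ⟨m, hm2, ?_⟩
  rw [List.getElem?_eq_getElem hm3]
  rw [List.getElem_take] at he
  exact congrArg some he


section Constr

variable (v N q K : ℕ) {d : ℕ} (CB DB : Fin d → Finset (Fin v))

noncomputable def cheapBatch (i : Fin d) (r : ℕ) : List ℕ := ((CB i).toList).map (fun y => y.1 + r * v)
noncomputable def deepBatch (i : Fin d) (j : ℕ) : List ℕ := ((DB i).toList).map (fun y => y.1 + (N - 1 - j) * v)
def privL (i : Fin d) : List ℕ := (List.range q).map (fun t => N * v + (t + i.1 * q))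
noncomputable def sN (i : Fin d) : List ℕ :=
  privL v N q i ++ (rep (cheapBatch v CB i) N ++ rep (deepBatch v N DB i) N)
noncomputable def seqs (hK : 0 < K) (i : Fin d) : List (Fin K) :=
  (sN v N q CB DB i).map (fun n => (⟨n % K, Nat.mod_lt n hK⟩ : Fin K))

variable {c e : ℕ}

lemma length_privL (i : Fin d) : (privL v N q i).length = q := by simp [privL]

lemma length_cheapBatch (hcb : ∀ i, (CB i).card = c) (i : Fin d) (r : ℕ) :
    (cheapBatch v CB i r).length = c := by
  simp [cheapBatch, Finset.length_toList, hcb i]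

lemma length_deepBatch (hdb : ∀ i, (DB i).card = e) (i : Fin d) (r : ℕ) :
    (deepBatch v N DB i r).length = e := by
  simp [deepBatch, Finset.length_toList, hdb i]

lemma length_repCheap (hcb : ∀ i, (CB i).card = c) (i : Fin d) :
    (rep (cheapBatch v CB i) N).length = N * c :=
  length_rep _ c N (fun j _ => length_cheapBatch v CB hcb i j)

lemma entries_lt (hKval : K = N * v + d * q) (i : Fin d) :
    ∀ n ∈ sN v N q CB DB i, n < K := by
  intro n hn
  rcases List.mem_append.1 hn with h | h
  · simp only [privL, List.mem_map, List.mem_range] at h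
    obtain ⟨t, ht, rfl⟩ := h
    have hi : i.1 + 1 ≤ d := i.isLt
    have h2 : (i.1 + 1) * q ≤ d * q := Nat.mul_le_mul_right _ hi
    rw [add_mul, one_mul] at h2
    omega
  · rcases List.mem_append.1 h with h | h
    · obtain ⟨r, hr, hx⟩ := mem_rep h
      simp only [cheapBatch, List.mem_map] at hx
      obtain ⟨y, _, rfl⟩ := hx
      have hyv := y.isLt
      have h2 : (r + 1) * v ≤ N * v := Nat.mul_le_mul_right _ (by omega)
      rw [add_mul, one_mul] at h2
      omega
    · obtain ⟨r, hr, hx⟩ := mem_rep h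
      simp only [deepBatch, List.mem_map] at hx
      obtain ⟨y, _, rfl⟩ := hx
      have hyv := y.isLt
      have h2 : (N - 1 - r + 1) * v ≤ N * v := Nat.mul_le_mul_right _ (by omega)
      rw [add_mul, one_mul] at h2
      omega

lemma mem_cheap (hcb : ∀ i, (CB i).card = c) {x : Fin v} {j : Fin d} (hx : x ∈ CB j)
    {r : ℕ} (hr : r < N) :
    x.1 + r * v ∈ (sN v N q CB DB j).take (q + (r + 1) * c) := by
  have hb : x.1 + r * v ∈ cheapBatch v CB j r :=
    List.mem_map.2 ⟨x, Finset.mem_toList.2 hx, rfl⟩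
  have h1 : x.1 + r * v ∈ (rep (cheapBatch v CB j) N).take ((r + 1) * c) :=
    rep_take (fun j' _ => length_cheapBatch v CB hcb j j') hr hb
  apply mem_take_append_right
  rw [length_privL, show q + (r + 1) * c - q = (r + 1) * c from by omega]
  exact mem_take_append_left h1

lemma mem_any (hcb : ∀ i, (CB i).card = c) (hdb : ∀ i, (DB i).card = e)
    {x : Fin v} {j : Fin d} (hx : x ∈ CB j ∨ x ∈ DB j) {r : ℕ} (hr : r < N) :
    x.1 + r * v ∈ (sN v N q CB DB j).take (q + N * c + (N - r) * e) := by
  rcases hx with hx | hx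
  · have h1 := mem_cheap v N q CB DB hcb hx hr
    apply mem_take_mono h1
    have h2 : (r + 1) * c ≤ N * c := Nat.mul_le_mul_right _ (by omega)
    omega
  · have hb : x.1 + r * v ∈ deepBatch v N DB j (N - 1 - r) := by
      simp only [deepBatch, List.mem_map]
      exact ⟨x, Finset.mem_toList.2 hx, by rw [show N - 1 - (N - 1 - r) = r from by omega]⟩
    have h1 : x.1 + r * v ∈ (rep (deepBatch v N DB j) N).take ((N - 1 - r + 1) * e) :=
      rep_take (fun j' _ => length_deepBatch v N DB hdb j j') (by omega) hb
    rw [show N - 1 - r + 1 = N - r from by omega] at h1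
    apply mem_take_append_right
    rw [length_privL, show q + N * c + (N - r) * e - q = N * c + (N - r) * e from by omega]
    apply mem_take_append_right
    rw [length_repCheap v N CB hcb,
      show N * c + (N - r) * e - N * c = (N - r) * e from by omega]
    exact h1

lemma mem_priv (i : Fin d) {t : ℕ} (ht : t < q) :
    N * v + (t + i.1 * q) ∈ (sN v N q CB DB i).take q := by
  apply mem_take_append_left
  rw [List.take_of_length_le (le_of_eq (length_privL v N q i))]
  exact List.mem_map.2 ⟨t, List.mem_range.2 ht, rfl⟩

lemma not_in_drop_shared (hcb : ∀ i, (CB i).card = c) (hdb : ∀ i, (DB i).card = e)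
    {x r : ℕ} (hx : x < v) (hr : r < N) (j : Fin d) :
    x + r * v ∉ (sN v N q CB DB j).drop (q + N * c + (N - r) * e) := by
  intro hmem
  have e1 := length_privL v N q j
  have e2 := length_repCheap v N CB hcb j
  unfold sN at hmem
  rw [List.drop_append] at hmem
  rcases List.mem_append.1 hmem with h | h
  · rw [List.drop_eq_nil_of_le (by rw [e1]; omega)] at h
    simp at h
  · rw [e1, List.drop_append] at h
    rcases List.mem_append.1 h with h' | h'
    · rw [List.drop_eq_nil_of_le (by rw [e2]; omega)] at h'
      simp at h'
    · rw [e2, show q + N * c + (N - r) * e - q - N * c = (N - r) * e from by omega] at h'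
      obtain ⟨j0, hj0a, hj0b, hj0c⟩ :=
        rep_drop (fun j' _ => length_deepBatch v N DB hdb j j') h'
      simp only [deepBatch, List.mem_map] at hj0c
      obtain ⟨y, _, heq⟩ := hj0c
      have hyv := y.isLt
      have h2 : (N - 1 - j0 + 1) * v ≤ r * v := Nat.mul_le_mul_right _ (by omega)
      rw [add_mul, one_mul] at h2
      omega

lemma not_in_drop_priv {w : ℕ} (j : Fin d) :
    N * v + w ∉ (sN v N q CB DB j).drop q := by
  intro hmem
  have e1 := length_privL v N q j
  unfold sN at hmem
  rw [List.drop_append, e1, Nat.sub_self, List.drop_zero] at hmem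
  rcases List.mem_append.1 hmem with h | h
  · rw [List.drop_eq_nil_of_le (le_of_eq e1)] at h
    simp at h
  · rcases List.mem_append.1 h with h' | h'
    · obtain ⟨r, hr, hxx⟩ := mem_rep h'
      simp only [cheapBatch, List.mem_map] at hxx
      obtain ⟨y, _, heq⟩ := hxx
      have hyv := y.isLt
      have h2 : (r + 1) * v ≤ N * v := Nat.mul_le_mul_right _ (by omega)
      rw [add_mul, one_mul] at h2
      omega
    · obtain ⟨r, hr, hxx⟩ := mem_rep h'
      simp only [deepBatch, List.mem_map] at hxx
      obtain ⟨y, _, heq⟩ := hxx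
      have hyv := y.isLt
      have h2 : (N - 1 - r + 1) * v ≤ N * v := Nat.mul_le_mul_right _ (by omega)
      rw [add_mul, one_mul] at h2
      omega

lemma fin_mem_take (hK : 0 < K) {z : Fin K} {j : Fin d} {t : ℕ}
    (h : (z : ℕ) ∈ (sN v N q CB DB j).take t) :
    z ∈ (seqs v N q K CB DB hK j).take t := by
  unfold seqs
  rw [← List.map_take]
  refine List.mem_map.2 ⟨(z : ℕ), h, ?_⟩
  ext
  simp [Nat.mod_eq_of_lt z.isLt]

lemma occursAt_le (hK : 0 < K) (hKval : K = N * v + d * q) {z : Fin K} {b : ℕ}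
    (h : ∀ j : Fin d, (z : ℕ) ∉ (sN v N q CB DB j).drop b) :
    ∀ ℓ, OccursAt (seqs v N q K CB DB hK) z ℓ → ℓ ≤ b := by
  rintro ℓ ⟨h1, i, hget⟩
  by_contra hcon
  push_neg at hcon
  unfold seqs at hget
  rw [List.getElem?_map] at hget
  rcases Option.map_eq_some_iff.1 hget with ⟨n, hn1, hn2⟩
  have hmem : n ∈ sN v N q CB DB i := List.mem_of_getElem? hn1
  have hnK : n < K := entries_lt v N q K CB DB hKval i n hmem
  have hzn : (z : ℕ) = n := by
    rw [← hn2]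
    simp [Nat.mod_eq_of_lt hnK]
  apply h i
  rw [hzn]
  exact mem_drop_of_getElem? hn1 (by omega)

lemma lMax_le (hK : 0 < K) (hKval : K = N * v + d * q) {z : Fin K} {b : ℕ}
    (h : ∀ j : Fin d, (z : ℕ) ∉ (sN v N q CB DB j).drop b) :
    lMax (seqs v N q K CB DB hK) z ≤ b :=
  csSup_le' (fun _ hℓ => occursAt_le v N q K CB DB hK hKval h _ hℓ)

lemma lMin_le (hK : 0 < K) {z : Fin K} {j : Fin d} {t : ℕ}
    (h : (z : ℕ) ∈ (sN v N q CB DB j).take t) :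
    lMin (seqs v N q K CB DB hK) z ≤ t := by
  obtain ⟨m, hm, hget⟩ := exists_getElem?_of_mem_take h
  have hocc : OccursAt (seqs v N q K CB DB hK) z (m + 1) := by
    refine ⟨by omega, j, ?_⟩
    unfold seqs
    rw [List.getElem?_map, show m + 1 - 1 = m from rfl, hget]
    simp only [Option.map_some]
    congr 1
    ext
    simp [Nat.mod_eq_of_lt z.isLt]
  have h2 : lMin (seqs v N q K CB DB hK) z ≤ m + 1 := Nat.sInf_le hocc
  omega

lemma decode (hKval : K = N * v + d * q) (z : Fin K) :
    (∃ (r : ℕ) (x : Fin v), r < N ∧ (z : ℕ) = x.1 + r * v) ∨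
    (∃ (i : Fin d) (t : ℕ), t < q ∧ (z : ℕ) = N * v + (t + i.1 * q)) := by
  have hz : (z : ℕ) < N * v + d * q := lt_of_lt_of_le z.isLt (le_of_eq hKval)
  rcases Nat.lt_or_ge (z : ℕ) (N * v) with h | h
  · left
    have hv : 0 < v := by
      rcases Nat.eq_zero_or_pos v with h0 | h0
      · exfalso; subst h0; simp at h
      · exact h0
    refine ⟨(z : ℕ) / v, ⟨(z : ℕ) % v, Nat.mod_lt _ hv⟩, ?_, ?_⟩
    · exact (Nat.div_lt_iff_lt_mul hv).2 h
    · show (z : ℕ) = (z : ℕ) % v + (z : ℕ) / v * v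
      have h2 := Nat.mod_add_div' (z : ℕ) v
      omega
  · right
    have hq0 : 0 < q := by
      rcases Nat.eq_zero_or_pos q with h0 | h0
      · exfalso; subst h0; simp at hz; omega
      · exact h0
    have hw : (z : ℕ) - N * v < d * q := by omega
    have hi : ((z : ℕ) - N * v) / q < d := (Nat.div_lt_iff_lt_mul hq0).2 hw
    refine ⟨⟨((z : ℕ) - N * v) / q, hi⟩, ((z : ℕ) - N * v) % q, Nat.mod_lt _ hq0, ?_⟩
    show (z : ℕ) = N * v + (((z : ℕ) - N * v) % q + ((z : ℕ) - N * v) / q * q)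
    have h2 := Nat.mod_add_div' ((z : ℕ) - N * v) q
    omega

end Constr

set_option maxHeartbeats 1600000 in
theorem isPCD_constr (v N q K : ℕ) {d : ℕ} (CB DB : Fin d → Finset (Fin v)) {c e : ℕ}
    (hK : 0 < K) (hKval : K = N * v + d * q)
    (hcb : ∀ i, (CB i).card = c) (hdb : ∀ i, (DB i).card = e)
    (hce : c ≤ e) (hq : q ≤ N * e + c)
    (hcheap : ∀ x : Fin v, ∃ j, x ∈ CB j)
    (hpair : ∀ x y : Fin v, x ≠ y → ∃ j, (x ∈ CB j ∨ x ∈ DB j) ∧ (y ∈ CB j ∨ y ∈ DB j)) :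
    IsPCD d K (2 * q + N * c + N * e + c) (seqs v N q K CB DB hK) := by
  set al := 2 * q + N * c + N * e + c with hal
  have privCov : ∀ (z : Fin K) (i : Fin d) (t : ℕ), t < q → (z : ℕ) = N * v + (t + i.1 * q) →
      z ∈ (seqs v N q K CB DB hK i).take q := by
    intro z i t ht hz
    apply fin_mem_take
    rw [hz]
    exact mem_priv v N q CB DB i ht
  have cheapCov : ∀ (z : Fin K) (r : ℕ) (x : Fin v), r < N → (z : ℕ) = x.1 + r * v →
      ∃ j, z ∈ (seqs v N q K CB DB hK j).take (q + (r + 1) * c) := by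
    intro z r x hr hz
    obtain ⟨j, hj⟩ := hcheap x
    exact ⟨j, fin_mem_take v N q K CB DB hK
      (by rw [hz]; exact mem_cheap v N q CB DB hcb hj hr)⟩
  have anyCov : ∀ (z : Fin K) (r : ℕ) (x : Fin v) (j : Fin d), r < N →
      (z : ℕ) = x.1 + r * v → (x ∈ CB j ∨ x ∈ DB j) →
      z ∈ (seqs v N q K CB DB hK j).take (q + N * c + (N - r) * e) := by
    intro z r x j hr hz hx
    exact fin_mem_take v N q K CB DB hK
      (by rw [hz]; exact mem_any v N q CB DB hcb hdb hx hr)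
  have pairCov : ∀ (z w : Fin K) (r ρ : ℕ) (x y : Fin v), r < N → ρ < N → r ≤ ρ →
      (z : ℕ) = x.1 + r * v → (w : ℕ) = y.1 + ρ * v →
      ∃ j, z ∈ (seqs v N q K CB DB hK j).take (q + N * c + (N - r) * e) ∧
        w ∈ (seqs v N q K CB DB hK j).take (q + N * c + (N - r) * e) := by
    intro z w r ρ x y hr hρ hrρ hz hw
    have hmono : q + N * c + (N - ρ) * e ≤ q + N * c + (N - r) * e := by
      have := Nat.mul_le_mul_right e (show N - ρ ≤ N - r from by omega)
      omega
    by_cases hxy : x = y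
    · obtain ⟨j, hj⟩ := hcheap x
      exact ⟨j, anyCov z r x j hr hz (Or.inl hj),
        mem_take_mono (anyCov w ρ y j hρ hw (Or.inl (hxy ▸ hj))) hmono⟩
    · obtain ⟨j, hxj, hyj⟩ := hpair x y hxy
      exact ⟨j, anyCov z r x j hr hz hxj,
        mem_take_mono (anyCov w ρ y j hρ hw hyj) hmono⟩
  constructor
  · -- Triplet condition
    have core : ∀ (z1 z2 z3 : Fin K) (r1 r2 r3 : ℕ) (x1 x2 x3 : Fin v),
        r1 < N → r2 < N → r3 < N → r1 ≤ r2 → r2 ≤ r3 →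
        (z1 : ℕ) = x1.1 + r1 * v → (z2 : ℕ) = x2.1 + r2 * v → (z3 : ℕ) = x3.1 + r3 * v →
        ∃ (j1 j2 : Fin d) (l1 l2 : ℕ), l1 + l2 ≤ al ∧
          z1 ∈ (seqs v N q K CB DB hK j1).take l1 ∧
          z2 ∈ (seqs v N q K CB DB hK j2).take l2 ∧
          z3 ∈ (seqs v N q K CB DB hK j2).take l2 := by
      intro z1 z2 z3 r1 r2 r3 x1 x2 x3 h1 h2 h3 h12 h23 e1 e2 e3
      obtain ⟨j1, hc1⟩ := cheapCov z1 r1 x1 h1 e1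
      obtain ⟨j2, hc2, hc3⟩ := pairCov z2 z3 r2 r3 x2 x3 h2 h3 h23 e2 e3
      refine ⟨j1, j2, q + (r1 + 1) * c, q + N * c + (N - r2) * e, ?_, hc1, hc2, hc3⟩
      have g1 : r1 * c ≤ r2 * c := Nat.mul_le_mul_right _ h12
      have g2 : r2 * c ≤ r2 * e := Nat.mul_le_mul_left _ hce
      have g3 : (N - r2) * e + r2 * e = N * e := by
        rw [← add_mul, show N - r2 + r2 = N from by omega]
      have g4 : (r1 + 1) * c = r1 * c + c := by rw [add_mul, one_mul]
      omega
    intro a b c3 hab hac hbc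
    have cruder : ∀ (z : Fin K) (r : ℕ) (x : Fin v), r < N → (z : ℕ) = x.1 + r * v →
        ∃ j, z ∈ (seqs v N q K CB DB hK j).take (q + N * c) := by
      intro z r x hr hz
      obtain ⟨j, hj⟩ := cheapCov z r x hr hz
      exact ⟨j, mem_take_mono hj (by
        have : (r + 1) * c ≤ N * c := Nat.mul_le_mul_right _ (by omega)
        omega)⟩
    have crudePair : ∀ (z w : Fin K) (r ρ : ℕ) (x y : Fin v), r < N → ρ < N →
        (z : ℕ) = x.1 + r * v → (w : ℕ) = y.1 + ρ * v →
        ∃ j, z ∈ (seqs v N q K CB DB hK j).take (q + N * c + N * e) ∧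
          w ∈ (seqs v N q K CB DB hK j).take (q + N * c + N * e) := by
      intro z w r ρ x y hr hρ hz hw
      have hcr : ∀ r' : ℕ, q + N * c + (N - r') * e ≤ q + N * c + N * e := by
        intro r'
        have : (N - r') * e ≤ N * e := Nat.mul_le_mul_right _ (by omega)
        omega
      rcases le_total r ρ with h | h
      · obtain ⟨j, h1, h2⟩ := pairCov z w r ρ x y hr hρ h hz hw
        exact ⟨j, mem_take_mono h1 (hcr r), mem_take_mono h2 (hcr r)⟩
      · obtain ⟨j, h1, h2⟩ := pairCov w z ρ r y x hρ hr h hw hz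
        exact ⟨j, mem_take_mono h2 (hcr ρ), mem_take_mono h1 (hcr ρ)⟩
    rcases decode v N q K hKval a with ⟨ra, xa, hra, hva⟩ | ⟨ia, ta, hta, hva⟩ <;>
      rcases decode v N q K hKval b with ⟨rb, xb, hrb, hvb⟩ | ⟨ib, tb, htb, hvb⟩ <;>
      rcases decode v N q K hKval c3 with ⟨rc, xc, hrc, hvc⟩ | ⟨ic, tc, htc, hvc⟩
    · -- SSS
      rcases le_total ra rb with h1 | h1
      · rcases le_total rb rc with h2 | h2
        · obtain ⟨j1, j2, l1, l2, hs, m1, m2, m3⟩ :=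
            core a b c3 ra rb rc xa xb xc hra hrb hrc h1 h2 hva hvb hvc
          exact ⟨j1, j2, j2, l1, l2, 0, by omega, by rintro x (rfl | rfl | rfl) <;> tauto⟩
        · rcases le_total ra rc with h3 | h3
          · obtain ⟨j1, j2, l1, l2, hs, m1, m2, m3⟩ :=
              core a c3 b ra rc rb xa xc xb hra hrc hrb h3 h2 hva hvc hvb
            exact ⟨j1, j2, j2, l1, l2, 0, by omega, by rintro x (rfl | rfl | rfl) <;> tauto⟩
          · obtain ⟨j1, j2, l1, l2, hs, m1, m2, m3⟩ :=
              core c3 a b rc ra rb xc xa xb hrc hra hrb h3 h1 hvc hva hvb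
            exact ⟨j1, j2, j2, l1, l2, 0, by omega, by rintro x (rfl | rfl | rfl) <;> tauto⟩
      · rcases le_total ra rc with h2 | h2
        · obtain ⟨j1, j2, l1, l2, hs, m1, m2, m3⟩ :=
            core b a c3 rb ra rc xb xa xc hrb hra hrc h1 h2 hvb hva hvc
          exact ⟨j1, j2, j2, l1, l2, 0, by omega, by rintro x (rfl | rfl | rfl) <;> tauto⟩
        · rcases le_total rb rc with h3 | h3
          · obtain ⟨j1, j2, l1, l2, hs, m1, m2, m3⟩ :=
              core b c3 a rb rc ra xb xc xa hrb hrc hra h3 h2 hvb hvc hva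
            exact ⟨j1, j2, j2, l1, l2, 0, by omega, by rintro x (rfl | rfl | rfl) <;> tauto⟩
          · obtain ⟨j1, j2, l1, l2, hs, m1, m2, m3⟩ :=
              core c3 b a rc rb ra xc xb xa hrc hrb hra h3 h1 hvc hvb hva
            exact ⟨j1, j2, j2, l1, l2, 0, by omega, by rintro x (rfl | rfl | rfl) <;> tauto⟩
    · -- S S P : a,b shared, c3 private
      obtain ⟨j, m1, m2⟩ := crudePair a b ra rb xa xb hra hrb hva hvb
      have m3 := privCov c3 ic tc htc hvc
      exact ⟨j, ic, ic, q + N * c + N * e, q, 0, by omega,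
        by rintro x (rfl | rfl | rfl) <;> tauto⟩
    · -- S P S : a,c3 shared, b private
      obtain ⟨j, m1, m2⟩ := crudePair a c3 ra rc xa xc hra hrc hva hvc
      have m3 := privCov b ib tb htb hvb
      exact ⟨j, ib, ib, q + N * c + N * e, q, 0, by omega,
        by rintro x (rfl | rfl | rfl) <;> tauto⟩
    · -- S P P : a shared
      obtain ⟨j, m1⟩ := cruder a ra xa hra hva
      have m2 := privCov b ib tb htb hvb
      have m3 := privCov c3 ic tc htc hvc
      exact ⟨j, ib, ic, q + N * c, q, q, by omega,
        by rintro x (rfl | rfl | rfl) <;> tauto⟩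
    · -- P S S
      obtain ⟨j, m1, m2⟩ := crudePair b c3 rb rc xb xc hrb hrc hvb hvc
      have m3 := privCov a ia ta hta hva
      exact ⟨j, ia, ia, q + N * c + N * e, q, 0, by omega,
        by rintro x (rfl | rfl | rfl) <;> tauto⟩
    · -- P S P
      obtain ⟨j, m1⟩ := cruder b rb xb hrb hvb
      have m2 := privCov a ia ta hta hva
      have m3 := privCov c3 ic tc htc hvc
      exact ⟨j, ia, ic, q + N * c, q, q, by omega,
        by rintro x (rfl | rfl | rfl) <;> tauto⟩
    · -- P P S
      obtain ⟨j, m1⟩ := cruder c3 rc xc hrc hvc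
      have m2 := privCov a ia ta hta hva
      have m3 := privCov b ib tb htb hvb
      exact ⟨j, ia, ib, q + N * c, q, q, by omega,
        by rintro x (rfl | rfl | rfl) <;> tauto⟩
    · -- P P P
      have m1 := privCov a ia ta hta hva
      have m2 := privCov b ib tb htb hvb
      have m3 := privCov c3 ic tc htc hvc
      exact ⟨ia, ib, ic, q, q, q, by omega,
        by rintro x (rfl | rfl | rfl) <;> tauto⟩
  · -- Singleton condition
    intro z _
    rcases decode v N q K hKval z with ⟨r, x, hr, hz⟩ | ⟨i, t, ht, hz⟩
    · obtain ⟨j, hj⟩ := hcheap x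
      have hmin : lMin (seqs v N q K CB DB hK) z ≤ q + (r + 1) * c :=
        lMin_le v N q K CB DB hK (by rw [hz]; exact mem_cheap v N q CB DB hcb hj hr)
      have hmax : lMax (seqs v N q K CB DB hK) z ≤ q + N * c + (N - r) * e :=
        lMax_le v N q K CB DB hK hKval (fun j' => by
          rw [hz]
          exact not_in_drop_shared v N q CB DB hcb hdb x.isLt hr j')
      have g2 : r * c ≤ r * e := Nat.mul_le_mul_left _ hce
      have g3 : (N - r) * e + r * e = N * e := by
        rw [← add_mul, show N - r + r = N from by omega]
      have g4 : (r + 1) * c = r * c + c := by rw [add_mul, one_mul]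
      omega
    · have hmin : lMin (seqs v N q K CB DB hK) z ≤ q :=
        lMin_le v N q K CB DB hK (by rw [hz]; exact mem_priv v N q CB DB i ht)
      have hmax : lMax (seqs v N q K CB DB hK) z ≤ q :=
        lMax_le v N q K CB DB hK hKval (fun j' => by
          rw [hz]
          exact not_in_drop_priv v N q CB DB j')
      omega

lemma ratio_tail (dd : ℕ) (T : ℝ) (A B C : ℕ) (hB : 0 < B)
    (hT : T ≤ (A : ℝ) / B)
    (hmem : ∀ N : ℕ, 2 ≤ N →
      ∃ r ∈ gammaSet dd, r = ((A * N : ℕ) : ℝ) / ((B * N + C : ℕ) : ℝ)) :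
    ∀ ε : ℝ, 0 < ε → ∃ r ∈ gammaSet dd, T - ε < r := by
  intro ε hε
  obtain ⟨N, hN⟩ := exists_nat_gt (max 2 ((A * C : ℝ) / (B * B * ε)))
  have hN2 : 2 ≤ N := by
    have h2 : (2 : ℝ) < N := lt_of_le_of_lt (le_max_left _ _) hN
    exact_mod_cast h2.le
  obtain ⟨r, hr, hrE⟩ := hmem N hN2
  refine ⟨r, hr, ?_⟩
  have hB' : (0 : ℝ) < B := by exact_mod_cast hB
  have hN' : (0 : ℝ) < N := by
    have : (0 : ℕ) < N := by omega
    exact_mod_cast this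
  have hC' : (0 : ℝ) ≤ C := Nat.cast_nonneg C
  have hA' : (0 : ℝ) ≤ A := Nat.cast_nonneg A
  have hden : (0 : ℝ) < (B : ℝ) * N + C := by positivity
  have key : (A : ℝ) / B - ((A * N : ℕ) : ℝ) / ((B * N + C : ℕ) : ℝ)
      = ((A : ℝ) * C) / (B * ((B : ℝ) * N + C)) := by
    push_cast
    field_simp
    ring
  have h3 : ((A : ℝ) * C) / (B * B * ε) < N := by
    have := lt_of_le_of_lt (le_max_right 2 ((A * C : ℝ) / (B * B * ε))) hN
    push_cast at this ⊢
    exact this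
  rw [div_lt_iff₀ (by positivity)] at h3
  have h4 : ((A : ℝ) * C) < ε * ((B : ℝ) * (B * N))  := by nlinarith
  have hlast : ((A : ℝ) * C) / (B * ((B : ℝ) * N + C)) < ε := by
    rw [div_lt_iff₀ (by positivity)]
    nlinarith [mul_nonneg (mul_nonneg hB'.le hC') hε.le]
  rw [hrE]
  linarith [key, hlast, hT]

end Stmt7

theorem stmt_7 (d k v v' : ℕ) (hd : 3 ≤ d) (hk : 0 < k) (hv : v = v' * d)
    (B : Fin d → Finset (Fin v))
    (hcard : ∀ i, (B i).card = k)
    (hcover : ∀ x y : Fin v, x ≠ y → ∃ i, x ∈ B i ∧ y ∈ B i)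
    (U : Fin d → Finset (Fin v))
    (hU : ∀ i, U i ⊆ B i)
    (hUcard : ∀ i, (U i).card = v')
    (hpart : ∀ x : Fin v, ∃! i : Fin d, x ∈ U i) :
    ∀ ε : ℝ, 0 < ε →
      ∃ r ∈ gammaSet d, (d : ℝ) / (3 - 2 * (v : ℝ) / ((k : ℝ) * (d : ℝ))) - ε < r := by
  intro ε hε
  have hd0 : 0 < d := by omega
  have hv'1 : 1 ≤ v' := by
    rcases Nat.eq_zero_or_pos v' with h0 | h0
    · exfalso
      have hv0 : v = 0 := by rw [hv, h0, zero_mul]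
      have h1 : (B ⟨0, hd0⟩).card ≤ v := by
        have h2 := Finset.card_le_univ (B ⟨0, hd0⟩)
        rwa [Fintype.card_fin] at h2
      rw [hcard] at h1
      omega
    · exact h0
  have hv'le : v' ≤ k := by
    have h1 := Finset.card_le_card (hU ⟨0, hd0⟩)
    rwa [hUcard, hcard] at h1
  have hv'lt : v' < k := by
    rcases eq_or_lt_of_le hv'le with heq | h
    · exfalso
      have hUB : ∀ i, U i = B i := fun i =>
        Finset.eq_of_subset_of_card_le (hU i) (by rw [hUcard, hcard, heq])
      obtain ⟨x, hx⟩ : (U ⟨0, hd0⟩).Nonempty := Finset.card_pos.1 (by rw [hUcard]; omega)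
      obtain ⟨y, hy⟩ : (U ⟨1, by omega⟩).Nonempty := Finset.card_pos.1 (by rw [hUcard]; omega)
      have hxy : x ≠ y := by
        rintro rfl
        have h01 : (⟨0, hd0⟩ : Fin d) = ⟨1, by omega⟩ := (hpart x).unique hx hy
        simp at h01
      obtain ⟨j, hxj, hyj⟩ := hcover x y hxy
      rw [← hUB j] at hxj hyj
      have h1 : j = ⟨0, hd0⟩ := (hpart x).unique hxj hx
      have h2 : j = ⟨1, by omega⟩ := (hpart y).unique hyj hy
      rw [h1] at h2
      simp at h2
    · exact h
  have hv3 : 3 ≤ v := by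
    have h3 : 1 * 3 ≤ v' * d := Nat.mul_le_mul hv'1 hd
    omega
  have hkR : (0 : ℝ) < k := by exact_mod_cast hk
  have hdR : (0 : ℝ) < d := by exact_mod_cast hd0
  have hv'ltR : (v' : ℝ) < k := by exact_mod_cast hv'lt
  have hdenR : (0 : ℝ) < 3 * k - 2 * v' := by linarith
  have hTeq : (d : ℝ) / (3 - 2 * (v : ℝ) / ((k : ℝ) * (d : ℝ)))
      = (d : ℝ) * k / (3 * k - 2 * v') := by
    have hvR : (v : ℝ) = (v' : ℝ) * d := by rw [hv]; push_cast; ring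
    rw [hvR]
    rw [show (3 : ℝ) - 2 * ((v' : ℝ) * d) / ((k : ℝ) * d) = (3 * k - 2 * v') / k by
      field_simp]
    rw [div_div_eq_mul_div]
  by_cases hreg : 2 * v' ≤ k
  · -- case P : cheap = U, deep = B \ U, privates q = N*(k-v')
    apply Stmt7.ratio_tail d _ (v + d * (k - v')) (3 * (k - v') + v') v' (by omega) ?_ ?_ ε hε
    · -- T ≤ A / B
      rw [hTeq]
      apply le_of_eq
      have hA : ((v + d * (k - v') : ℕ) : ℝ) = (d : ℝ) * k := by
        push_cast [Nat.cast_sub hv'le]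
        rw [hv]
        push_cast
        ring
      have hB : ((3 * (k - v') + v' : ℕ) : ℝ) = 3 * (k : ℝ) - 2 * v' := by
        push_cast [Nat.cast_sub hv'le]
        ring
      rw [hA, hB]
    · -- designs
      intro N hN
      have hdb : ∀ i, (B i \ U i).card = k - v' := fun i => by
        rw [Finset.card_sdiff_of_subset (hU i), hcard, hUcard]
      have hcheap : ∀ x : Fin v, ∃ j, x ∈ U j := fun x => (hpart x).exists
      have hpair : ∀ x y : Fin v, x ≠ y →
          ∃ j, (x ∈ U j ∨ x ∈ B j \ U j) ∧ (y ∈ U j ∨ y ∈ B j \ U j) := by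
        intro x y hxy
        obtain ⟨j, hxj, hyj⟩ := hcover x y hxy
        refine ⟨j, ?_, ?_⟩
        · by_cases h : x ∈ U j
          · exact Or.inl h
          · exact Or.inr (Finset.mem_sdiff.2 ⟨hxj, h⟩)
        · by_cases h : y ∈ U j
          · exact Or.inl h
          · exact Or.inr (Finset.mem_sdiff.2 ⟨hyj, h⟩)
      have hK0 : 0 < N * v + d * (N * (k - v')) := by
        have h6 : 2 * 3 ≤ N * v := Nat.mul_le_mul hN hv3
        omega
      have hpcd := Stmt7.isPCD_constr v N (N * (k - v')) (N * v + d * (N * (k - v')))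
        U (fun i => B i \ U i) hK0 rfl hUcard hdb (by omega) (by omega) hcheap hpair
      refine ⟨_, ⟨N * v + d * (N * (k - v')),
        2 * (N * (k - v')) + N * v' + N * (k - v') + v', _, ?_, ?_, hpcd, rfl⟩, ?_⟩
      · have h6 : 2 * 3 ≤ N * v := Nat.mul_le_mul hN hv3
        omega
      · omega
      · rw [show N * v + d * (N * (k - v')) = (v + d * (k - v')) * N from by ring,
          show 2 * (N * (k - v')) + N * v' + N * (k - v') + v'
            = (3 * (k - v') + v') * N + v' from by ring]
  · -- case S : cheap = B \ U, deep = U, no privates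
    apply Stmt7.ratio_tail d _ v ((k - v') + v') (k - v') (by omega) ?_ ?_ ε hε
    · -- T ≤ A / B
      rw [hTeq]
      have hA : ((v : ℕ) : ℝ) = (v' : ℝ) * d := by rw [hv]; push_cast; ring
      have hB : (((k - v') + v' : ℕ) : ℝ) = (k : ℝ) := by
        push_cast [Nat.cast_sub hv'le]
        ring
      rw [hA, hB]
      rw [div_le_div_iff₀ hdenR hkR]
      have hk2v : (k : ℝ) ≤ 2 * v' := by
        have : k ≤ 2 * v' := by omega
        exact_mod_cast this
      nlinarith [mul_nonneg (sub_nonneg.2 hv'ltR.le) (sub_nonneg.2 hk2v)]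
    · intro N hN
      have hcb : ∀ i, (B i \ U i).card = k - v' := fun i => by
        rw [Finset.card_sdiff_of_subset (hU i), hcard, hUcard]
      have hvk : k < v := by
        have h3 : v' * 3 ≤ v' * d := Nat.mul_le_mul_left _ hd
        omega
      have hcheapS : ∀ x : Fin v, ∃ j, x ∈ B j \ U j := by
        intro x
        obtain ⟨i0, hi0, -⟩ := hpart x
        have hcompl : ((B i0)ᶜ : Finset (Fin v)).Nonempty := by
          rw [← Finset.card_pos, Finset.card_compl, hcard, Fintype.card_fin]
          omega
        obtain ⟨y, hy⟩ := hcompl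
        rw [Finset.mem_compl] at hy
        have hxy : x ≠ y := fun h => hy (h ▸ hU i0 hi0)
        obtain ⟨j, hxj, hyj⟩ := hcover x y hxy
        refine ⟨j, Finset.mem_sdiff.2 ⟨hxj, fun hUj => ?_⟩⟩
        have hj : j = i0 := (hpart x).unique hUj hi0
        exact hy (hj ▸ hyj)
      have hpair : ∀ x y : Fin v, x ≠ y →
          ∃ j, (x ∈ B j \ U j ∨ x ∈ U j) ∧ (y ∈ B j \ U j ∨ y ∈ U j) := by
        intro x y hxy
        obtain ⟨j, hxj, hyj⟩ := hcover x y hxy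
        refine ⟨j, ?_, ?_⟩
        · by_cases h : x ∈ U j
          · exact Or.inr h
          · exact Or.inl (Finset.mem_sdiff.2 ⟨hxj, h⟩)
        · by_cases h : y ∈ U j
          · exact Or.inr h
          · exact Or.inl (Finset.mem_sdiff.2 ⟨hyj, h⟩)
      have hK0 : 0 < N * v + d * 0 := by
        have h6 : 2 * 3 ≤ N * v := Nat.mul_le_mul hN hv3
        omega
      have hpcd := Stmt7.isPCD_constr v N 0 (N * v + d * 0)
        (fun i => B i \ U i) U hK0 rfl hcb hUcard (by omega) (by omega) hcheapS hpair
      refine ⟨_, ⟨N * v + d * 0,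
        2 * 0 + N * (k - v') + N * v' + (k - v'), _, ?_, ?_, hpcd, rfl⟩, ?_⟩
      · have h6 : 2 * 3 ≤ N * v := Nat.mul_le_mul hN hv3
        omega
      · have h2 : 2 * 1 ≤ N * v' := Nat.mul_le_mul hN hv'1
        omega
      · rw [show N * v + d * 0 = v * N from by ring,
          show 2 * 0 + N * (k - v') + N * v' + (k - v')
            = ((k - v') + v') * N + (k - v') from by ring]
end

section
/- In the prefix covering design constructed from a covering design with multi-matching (Theorem on transformation), for every element x with ℓ_min(x) = m + (n−i)v' + j for some 1 ≤ i ≤ n, 1 ≤ j ≤ v', we have ℓ_max(x) ≤ m + nv' + i(k−v'), and consequently ℓ_min(x) + ℓ_max(x) ≤ 2m + nk + v', where m = nk − (n−1)v'. In particular the (strengthened) singleton bound ℓ_min(x)+ℓ_max(x) ≤ T holds with T = 3nk − (2n−3)v' (not only ≤ T+1), provided k ≥ 2v'. -/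
open scoped BigOperators

private lemma flat_len {α : Type*} (c : ℕ) : ∀ (L : List (List α)),
    (∀ l ∈ L, l.length = c) → L.flatten.length = L.length * c
  | [], _ => by simp
  | l :: L, h => by
    have h1 : l.length = c := h l List.mem_cons_self
    have h2 := flat_len c L (fun l' hl' => h l' (List.mem_cons_of_mem _ hl'))
    simp only [List.flatten_cons, List.length_append, List.length_cons, h1, h2]
    ring

private lemma flat_get {α : Type*} (c : ℕ) : ∀ (L : List (List α)) (p : ℕ) (x : α),
    (∀ l ∈ L, l.length = c) → L.flatten[p]? = some x →
    ∃ q t, q < L.length ∧ t < c ∧ p = q * c + t ∧ ∃ l, L[q]? = some l ∧ l[t]? = some x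
  | [], p, x, _, hx => by simp at hx
  | l :: L, p, x, h, hx => by
    have h1 : l.length = c := h l List.mem_cons_self
    rw [List.flatten_cons, List.getElem?_append] at hx
    by_cases hp : p < c
    · rw [if_pos (by rw [h1]; exact hp)] at hx
      exact ⟨0, p, Nat.succ_pos _, hp, by simp, l, by simp, hx⟩
    · rw [if_neg (by rw [h1]; exact hp)] at hx
      rw [h1] at hx
      obtain ⟨q, t, hq, ht, hpe, l', hl', hx'⟩ :=
        flat_get c L (p - c) x (fun l' hl' => h l' (List.mem_cons_of_mem _ hl')) hx
      refine ⟨q + 1, t, Nat.succ_lt_succ hq, ht, ?_, l', by simpa using hl', hx'⟩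
      have hcp : c ≤ p := le_of_not_gt hp
      have he : p = c + (p - c) := (Nat.add_sub_cancel' hcp).symm
      rw [he, hpe]; ring

private lemma aux_uniq {v a b st t : ℕ} (hst : st < v) (ht : t < v)
    (h : a * v + st = b * v + t) : a = b := by
  rcases Nat.lt_trichotomy a b with h1 | h1 | h1
  · exfalso
    have h2 : (a + 1) * v ≤ b * v := Nat.mul_le_mul_right v h1
    have h3 : (a + 1) * v = a * v + v := by ring
    linarith
  · exact h1
  · exfalso
    have h2 : (b + 1) * v ≤ a * v := Nat.mul_le_mul_right v h1
    have h3 : (b + 1) * v = b * v + v := by ring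
    linarith

theorem stmt_9 (d k v v' n m T : ℕ) (hd : 3 ≤ d) (hn : 1 ≤ n) (hk2 : 2 * v' ≤ k)
    (hv : v = v' * d)
    (hm : m + (n - 1) * v' = n * k)
    (hT : T + 2 * n * v' = 3 * n * k + 3 * v')
    (b : Fin d → List (Fin v))
    (hlen : ∀ i, (b i).length = k)
    (hnodup : ∀ i, (b i).Nodup)
    (hcover : ∀ x y : Fin v, x ≠ y → ∃ i, x ∈ b i ∧ y ∈ b i)
    (hpart : ∀ x : Fin v, ∃! i : Fin d, x ∈ (b i).take v')
    (s : Fin d → List (Fin (n * v + d * m)))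
    (hs : s = fun i =>
        List.ofFn (fun t : Fin m => pcdElem (n * v) d m (n * v + d * m) le_rfl i t) ++
        (List.ofFn (fun j : Fin n =>
          ((b i).take v').map (fun x => pcdElem 0 n v (n * v + d * m) (by simp) j x))).flatten ++
        ((List.ofFn (fun j : Fin n =>
          ((b i).drop v').map (fun x => pcdElem 0 n v (n * v + d * m) (by simp) j x))).reverse).flatten) :
    ∀ (x : Fin (n * v + d * m)) (i j : ℕ), 1 ≤ i → i ≤ n → 1 ≤ j → j ≤ v' →
      lMin s x = m + (n - i) * v' + j →
      lMax s x ≤ m + n * v' + i * (k - v') ∧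
      lMin s x + lMax s x ≤ 2 * m + n * k + v' ∧
      lMin s x + lMax s x ≤ T := by

  intro x i j hi1 hin hj1 hjv' hmin
  have hv'1 : 1 ≤ v' := le_trans hj1 hjv'
  have hv'k : v' ≤ k := by omega
  have hvpos : 0 < v := by rw [hv]; exact Nat.mul_pos hv'1 (by omega)
  have hsucc : (n - 1) * v' + v' = n * v' := by
    have h1 : n - 1 + 1 = n := by omega
    calc (n - 1) * v' + v' = (n - 1 + 1) * v' := by ring
      _ = n * v' := by rw [h1]
  -- structural facts about the U and R blocks
  have hUmem : ∀ (i' : Fin d) l, l ∈ List.ofFn (fun jj : Fin n =>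
      ((b i').take v').map (fun y => pcdElem 0 n v (n * v + d * m) (by simp) jj y)) →
      l.length = v' := by
    intro i' l hl
    simp only [List.mem_ofFn, Set.mem_range] at hl
    obtain ⟨jj, rfl⟩ := hl
    simp only [List.length_map, List.length_take, hlen]
    omega
  have hRmem : ∀ (i' : Fin d) l, l ∈ (List.ofFn (fun jj : Fin n =>
      ((b i').drop v').map (fun y => pcdElem 0 n v (n * v + d * m) (by simp) jj y))).reverse →
      l.length = k - v' := by
    intro i' l hl
    rw [List.mem_reverse] at hl
    simp only [List.mem_ofFn, Set.mem_range] at hl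
    obtain ⟨jj, rfl⟩ := hl
    simp only [List.length_map, List.length_drop, hlen]
  have hslen : ∀ i' : Fin d, (s i').length = m + n * v' + n * (k - v') := by
    intro i'
    simp only [hs]
    rw [List.length_append, List.length_append,
      flat_len v' _ (hUmem i'), flat_len (k - v') _ (hRmem i')]
    simp only [List.length_ofFn, List.length_reverse]
  -- decoding occurrences
  have hdec : ∀ (i' : Fin d) (p : ℕ) (z : Fin (n * v + d * m)), (s i')[p]? = some z →
      (p < m ∧ n * v ≤ z.1) ∨
      (∃ jj t, jj < n ∧ t < v' ∧ p = m + (jj * v' + t) ∧ ∃ yv, yv < v ∧ z.1 = jj * v + yv) ∨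
      (∃ r t, r < n ∧ t < k - v' ∧ p = m + n * v' + (r * (k - v') + t) ∧
        ∃ yv, yv < v ∧ z.1 = (n - 1 - r) * v + yv) := by
    intro i' p z hx
    simp only [hs] at hx
    rw [List.getElem?_append] at hx
    simp only [List.length_append] at hx
    rw [flat_len v' _ (hUmem i')] at hx
    simp only [List.length_ofFn] at hx
    by_cases h1 : p < m + n * v'
    · rw [if_pos h1, List.getElem?_append] at hx
      simp only [List.length_ofFn] at hx
      by_cases h2 : p < m
      · rw [if_pos h2, List.getElem?_ofFn] at hx
        rw [dif_pos h2] at hx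
        obtain rfl := Option.some.inj hx
        exact Or.inl ⟨h2, Nat.le_add_right _ _⟩
      · rw [if_neg h2] at hx
        obtain ⟨q, t, hq, ht, hpe, l, hlq, hlt⟩ := flat_get v' _ _ _ (hUmem i') hx
        rw [List.length_ofFn] at hq
        rw [List.getElem?_ofFn] at hlq
        rw [dif_pos hq] at hlq
        obtain rfl := Option.some.inj hlq
        simp only [List.getElem?_map] at hlt
        obtain ⟨y, hy, rfl⟩ := Option.map_eq_some_iff.mp hlt
        refine Or.inr (Or.inl ⟨q, t, hq, ht, ?_, y.1, y.isLt, by simp [pcdElem]⟩)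
        have hmp : m ≤ p := le_of_not_gt h2
        rw [← hpe]
        exact (Nat.add_sub_cancel' hmp).symm
    · rw [if_neg h1] at hx
      obtain ⟨q, t, hq, ht, hpe, l, hlq, hlt⟩ := flat_get (k - v') _ _ _ (hRmem i') hx
      rw [List.length_reverse, List.length_ofFn] at hq
      obtain ⟨hql, hget⟩ := List.getElem?_eq_some_iff.mp hlq
      rw [List.getElem_reverse] at hget
      simp only [List.length_ofFn] at hget
      rw [List.getElem_ofFn] at hget
      obtain rfl := hget
      simp only [List.getElem?_map] at hlt
      obtain ⟨y, hy, rfl⟩ := Option.map_eq_some_iff.mp hlt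
      refine Or.inr (Or.inr ⟨q, t, hq, ht, ?_, y.1, y.isLt, by simp [pcdElem]⟩)
      rw [← hpe]
      exact (Nat.add_sub_cancel' (le_of_not_gt h1)).symm
  -- nonemptiness and boundedness of the occurrence set
  have hne : {ℓ | OccursAt s x ℓ}.Nonempty := by
    by_contra hcon
    rw [Set.not_nonempty_iff_eq_empty] at hcon
    rw [lMin, hcon, Nat.sInf_empty] at hmin
    have hpos : 0 < m + (n - i) * v' + j := Nat.add_pos_right _ hj1
    exact ne_of_lt hpos hmin
  have hbdd : BddAbove {ℓ | OccursAt s x ℓ} := by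
    refine ⟨m + n * v' + n * (k - v'), ?_⟩
    rintro ℓ ⟨hℓ1, i', hg⟩
    have h2 : ℓ - 1 < (s i').length := (List.getElem?_eq_some_iff.mp hg).1
    rw [hslen i'] at h2
    exact Nat.le_of_pred_lt h2
  have hmemmin : OccursAt s x (lMin s x) := Nat.sInf_mem hne
  have hmemmax : OccursAt s x (lMax s x) := Nat.sSup_mem hne hbdd
  -- decode the minimal occurrence
  obtain ⟨hl1, i0, hg0⟩ := hmemmin
  rw [hmin] at hg0
  have hp0 : m + (n - i) * v' + j - 1 = m + ((n - i) * v' + (j - 1)) := by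
    rw [Nat.add_sub_assoc hj1, Nat.add_assoc]
  rw [hp0] at hg0
  have hXlt : (n - i) * v' + (j - 1) < n * v' := by
    have h1 : (n - i) * v' ≤ (n - 1) * v' := Nat.mul_le_mul_right _ (by omega)
    have h2 : j - 1 < v' := by omega
    linarith [hsucc]
  obtain ⟨yv, hyv, hxval⟩ : ∃ yv, yv < v ∧ x.1 = (n - i) * v + yv := by
    obtain hA | ⟨jj, t, hjjn, htv, hpe, yv, hyv, hxv⟩ | ⟨r, t, hrn, htk, hpe, yv, hyv, hxv⟩ :=
      hdec i0 _ x hg0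
    · exact absurd hA.1 (Nat.not_lt.mpr (Nat.le_add_right _ _))
    · have hcan : (n - i) * v' + (j - 1) = jj * v' + t := Nat.add_left_cancel hpe
      have hjj : n - i = jj := aux_uniq (by omega) htv hcan
      exact ⟨yv, hyv, by rw [hxv, hjj]⟩
    · exfalso
      rw [Nat.add_assoc] at hpe
      have hcan : (n - i) * v' + (j - 1) = n * v' + (r * (k - v') + t) :=
        Nat.add_left_cancel hpe
      have hge : n * v' ≤ (n - i) * v' + (j - 1) := by
        rw [hcan]; exact Nat.le_add_right _ _
      exact absurd hXlt (not_lt.mpr hge)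
  -- decode the maximal occurrence
  obtain ⟨hL1, i1, hg1⟩ := hmemmax
  have hLsucc : lMax s x = (lMax s x - 1) + 1 := (Nat.succ_pred_eq_of_pos hL1).symm
  have P1 : lMax s x ≤ m + n * v' + i * (k - v') := by
    obtain hA | ⟨jj, t, hjjn, htv, hpe, yv', hyv', hxv'⟩ | ⟨r, t, hrn, htk, hpe, yv', hyv', hxv'⟩ :=
      hdec i1 _ x hg1
    · exfalso
      have h0 := hA.2
      rw [hxval] at h0
      have h1 : (n - i + 1) * v = (n - i) * v + v := by ring
      have h2 : (n - i + 1) * v ≤ n * v := Nat.mul_le_mul_right _ (by omega)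
      linarith
    · have h1 : jj * v' ≤ (n - 1) * v' := Nat.mul_le_mul_right _ (by omega)
      rw [hLsucc, hpe]
      have h3 : (0:ℕ) ≤ i * (k - v') := Nat.zero_le _
      linarith [hsucc]
    · have hreq : n - 1 - r = n - i := aux_uniq hyv' hyv (hxv'.symm.trans hxval)
      have hr : r = i - 1 := by omega
      subst hr
      have hi' : (i - 1) * (k - v') + (k - v') = i * (k - v') := by
        have h1 : i - 1 + 1 = i := by omega
        calc (i - 1) * (k - v') + (k - v') = (i - 1 + 1) * (k - v') := by ring
          _ = i * (k - v') := by rw [h1]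
      rw [hLsucc, hpe]
      linarith
  have e1 : n * v' + n * (k - v') = n * k := by
    rw [← Nat.mul_add]
    congr 1
    omega
  have e2 : i * (k - v') + (n - i) * (k - v') = n * (k - v') := by
    rw [← Nat.add_mul]
    congr 1
    omega
  have e3 : (n - i) * v' ≤ (n - i) * (k - v') := Nat.mul_le_mul_left _ (by omega)
  have P2 : (n - i) * v' + j + (n * v' + i * (k - v')) ≤ n * k + v' := by
    linarith
  refine ⟨P1, ?_, ?_⟩
  · rw [hmin]; linarith
  · rw [hmin]; linarith [hm, hT, hsucc]
end

section
/- Upper bound on prefix covering design quality: for every d ≥ 3, γ_d ≤ d / (3(1 − √(2/d))). In particular γ_d = d/3 + √(2/9)·√d + o(√d). -/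
open scoped BigOperators

/- ---------------------------------------------------------------------------
Auxiliary material for the proof of the upper bound.
--------------------------------------------------------------------------- -/

section Aux

lemma pcd_mem_take_iff {β : Type*} {l : List β} {L : ℕ} {x : β} :
    x ∈ l.take L ↔ ∃ p, p < L ∧ l[p]? = some x := by
  constructor
  · intro h
    obtain ⟨n, hn⟩ := List.mem_iff_getElem?.mp h
    have hlt : n < L := by
      by_contra hge
      push_neg at hge
      have hlen : (l.take L).length ≤ n := by
        have := List.length_take_le L l
        omega
      have : (l.take L)[n]? = none := List.getElem?_eq_none hlen
      rw [this] at hn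
      cases hn
    refine ⟨n, hlt, ?_⟩
    rwa [List.getElem?_take_of_lt hlt] at hn
  · rintro ⟨p, hp, hsome⟩
    have : (l.take L)[p]? = some x := by rwa [List.getElem?_take_of_lt hp]
    obtain ⟨h1, h2⟩ := List.getElem?_eq_some_iff.mp this
    exact h2 ▸ List.getElem_mem h1

lemma pcd_mem_of_getElem? {β : Type*} {l : List β} {p : ℕ} {a : β}
    (h : l[p]? = some a) : a ∈ l := by
  obtain ⟨h1, h2⟩ := List.getElem?_eq_some_iff.mp h
  exact h2 ▸ List.getElem_mem h1

lemma pcd_take_mono {β : Type*} {l : List β} {L L' : ℕ} {x : β}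
    (h : L ≤ L') (hx : x ∈ l.take L) : x ∈ l.take L' := by
  obtain ⟨p, hp, hs⟩ := pcd_mem_take_iff.mp hx
  exact pcd_mem_take_iff.mpr ⟨p, by omega, hs⟩

lemma pcd_count_two {β : Type*} [DecidableEq β] {l : List β} {a : β} {p q : ℕ}
    (hpq : p ≠ q) (hp : l[p]? = some a) (hq : l[q]? = some a) : 2 ≤ l.count a := by
  have main : ∀ (p q : ℕ), p < q → l[p]? = some a → l[q]? = some a → 2 ≤ l.count a := by
    intro p q hlt hp hq
    have h1 : a ∈ l.take q := pcd_mem_take_iff.mpr ⟨p, hlt, hp⟩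
    have h2 : a ∈ l.drop q := by
      have h : (l.drop q)[0]? = l[q + 0]? := List.getElem?_drop
      exact pcd_mem_of_getElem? (h.trans (by simpa using hq))
    have hc : l.count a = (l.take q).count a + (l.drop q).count a := by
      conv_lhs => rw [← List.take_append_drop q l]
      exact List.count_append
    have c1 : 0 < (l.take q).count a := List.count_pos_iff.mpr h1
    have c2 : 0 < (l.drop q).count a := List.count_pos_iff.mpr h2
    omega
  rcases Nat.lt_or_ge p q with h | h
  · exact main p q h hp hq
  · exact main q p (by omega) hq hp

/-- Adjacency: co-occurrence within the top `m` levels of some sequence. -/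
def AdjP {d K : ℕ} (s : Fin d → List (Fin K)) (m : ℕ) (x y : Fin K) : Prop :=
  ∃ i : Fin d, x ∈ (s i).take m ∧ y ∈ (s i).take m

lemma adjP_symm {d K : ℕ} {s : Fin d → List (Fin K)} {m : ℕ} {x y : Fin K}
    (h : AdjP s m x y) : AdjP s m y x := by
  obtain ⟨i, h1, h2⟩ := h
  exact ⟨i, h2, h1⟩

lemma pcd_sqrt_lt_one {d : ℕ} (hd : 3 ≤ d) : Real.sqrt (2 / (d : ℝ)) < 1 := by
  have hd0 : (0 : ℝ) < d := by
    have : (3 : ℝ) ≤ d := by exact_mod_cast hd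
    linarith
  have h1 : 2 / (d : ℝ) < 1 := by
    rw [div_lt_one hd0]
    have : (3 : ℝ) ≤ d := by exact_mod_cast hd
    linarith
  have h2 : Real.sqrt (2 / (d : ℝ)) * Real.sqrt (2 / (d : ℝ)) = 2 / d :=
    Real.mul_self_sqrt (by positivity)
  by_contra hcon
  push_neg at hcon
  nlinarith [Real.sqrt_nonneg (2 / (d : ℝ))]

end Aux

set_option maxHeartbeats 2000000 in
open Finset in
theorem pcd_core (d K α : ℕ) (hd : 3 ≤ d) (hK : 4 ≤ K) (s : Fin d → List (Fin K))
    (htrip : TripletCond d K α s) (hsing : SingletonCond d K α s) :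
    (K : ℝ) * (3 * (1 - Real.sqrt (2 / (d : ℝ)))) ≤ (d : ℝ) * (α : ℝ) := by
  classical
  -- a third element distinct from any two given ones
  have hex3 : ∀ u v : Fin K, ∃ w : Fin K, w ≠ u ∧ w ≠ v := by
    intro u v
    by_contra h
    push_neg at h
    have hsub : (univ : Finset (Fin K)) ⊆ {u, v} := by
      intro w _
      simp only [Finset.mem_insert, Finset.mem_singleton]
      by_cases h1 : w = u
      · exact Or.inl h1
      · exact Or.inr (h w h1)
    have hle := Finset.card_le_card hsub
    have h2 : ({u, v} : Finset (Fin K)).card ≤ 2 :=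
      (Finset.card_insert_le _ _).trans (by simp)
    rw [Finset.card_univ, Fintype.card_fin] at hle
    omega
  -- α ≥ 3
  have hα3 : 3 ≤ α := by
    have h01 : (⟨0, by omega⟩ : Fin K) ≠ ⟨1, by omega⟩ := by simp [Fin.ext_iff]
    have h02 : (⟨0, by omega⟩ : Fin K) ≠ ⟨2, by omega⟩ := by simp [Fin.ext_iff]
    have h12 : (⟨1, by omega⟩ : Fin K) ≠ ⟨2, by omega⟩ := by simp [Fin.ext_iff]
    obtain ⟨i, i', i'', ℓ, ℓ', ℓ'', hsum, hcov⟩ := htrip _ _ _ h01 h02 h12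
    have hsub : ({⟨0, by omega⟩, ⟨1, by omega⟩, ⟨2, by omega⟩} : Finset (Fin K)) ⊆
        ((s i).take ℓ).toFinset ∪ ((s i').take ℓ').toFinset ∪ ((s i'').take ℓ'').toFinset := by
      intro w hw
      simp only [Finset.mem_insert, Finset.mem_singleton] at hw
      rcases hcov w hw with h | h | h
      · exact Finset.mem_union_left _ (Finset.mem_union_left _ (List.mem_toFinset.mpr h))
      · exact Finset.mem_union_left _ (Finset.mem_union_right _ (List.mem_toFinset.mpr h))
      · exact Finset.mem_union_right _ (List.mem_toFinset.mpr h)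
    have hcard3 : ({⟨0, by omega⟩, ⟨1, by omega⟩, ⟨2, by omega⟩} : Finset (Fin K)).card = 3 := by
      rw [Finset.card_insert_of_notMem (by simp [h01, h02]),
        Finset.card_insert_of_notMem (by simp [h12]), Finset.card_singleton]
    have hle := Finset.card_le_card hsub
    have t1 : ((s i).take ℓ).toFinset.card ≤ ℓ :=
      (List.toFinset_card_le _).trans (List.length_take_le _ _)
    have t2 : ((s i').take ℓ').toFinset.card ≤ ℓ' :=
      (List.toFinset_card_le _).trans (List.length_take_le _ _)
    have t3 : ((s i'').take ℓ'').toFinset.card ≤ ℓ'' :=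
      (List.toFinset_card_le _).trans (List.length_take_le _ _)
    have hu1 : (((s i).take ℓ).toFinset ∪ ((s i').take ℓ').toFinset ∪
        ((s i'').take ℓ'').toFinset).card ≤ ℓ + ℓ' + ℓ'' := by
      have c1 := Finset.card_union_le (((s i).take ℓ).toFinset ∪ ((s i').take ℓ').toFinset)
        (((s i'').take ℓ'').toFinset)
      have c2 := Finset.card_union_le (((s i).take ℓ).toFinset) (((s i').take ℓ').toFinset)
      omega
    omega
  -- every element occurs at some level ≤ α
  have hocc : ∀ x : Fin K, ∃ ℓ, ℓ ≤ α ∧ OccursAt s x ℓ := by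
    intro x
    obtain ⟨u, hu⟩ := hex3 x x
    obtain ⟨v, hv1, hv2⟩ := hex3 x u
    obtain ⟨i, i', i'', ℓ, ℓ', ℓ'', hsum, hcov⟩ :=
      htrip x u v (Ne.symm hu.1) (Ne.symm hv1) (Ne.symm hv2)
    rcases hcov x (Or.inl rfl) with h | h | h <;>
    · obtain ⟨p, hp, hsome⟩ := pcd_mem_take_iff.mp h
      exact ⟨p + 1, by omega, by omega, _, by simpa using hsome⟩
  have hoccne : ∀ x : Fin K, {ℓ | OccursAt s x ℓ}.Nonempty :=
    fun x => ⟨(hocc x).choose, (hocc x).choose_spec.2⟩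
  have hlMin_mem : ∀ x : Fin K, OccursAt s x (lMin s x) :=
    fun x => Nat.sInf_mem (hoccne x)
  have hlMin_le : ∀ x ℓ, OccursAt s x ℓ → lMin s x ≤ ℓ :=
    fun x ℓ h => Nat.sInf_le h
  have hlMin_pos : ∀ x, 1 ≤ lMin s x := fun x => (hlMin_mem x).1
  have hlMinα : ∀ x, lMin s x ≤ α := by
    intro x
    obtain ⟨ℓ, h1, h2⟩ := hocc x
    exact (hlMin_le x ℓ h2).trans h1
  have hbdd : ∀ x : Fin K, BddAbove {ℓ | OccursAt s x ℓ} := by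
    intro x
    refine ⟨Finset.univ.sup (fun i => (s i).length), ?_⟩
    rintro ℓ ⟨h1, i, hsome⟩
    have hlen := (List.getElem?_eq_some_iff.mp hsome).1
    have hsup : (s i).length ≤ Finset.univ.sup (fun i => (s i).length) :=
      Finset.le_sup (f := fun i => (s i).length) (Finset.mem_univ i)
    omega
  have hlMax_ge : ∀ x ℓ, OccursAt s x ℓ → ℓ ≤ lMax s x :=
    fun x ℓ h => le_csSup (hbdd x) h
  have hslot_occ : ∀ (x : Fin K) (i : Fin d) (p : ℕ), (s i)[p]? = some x →
      OccursAt s x (p + 1) := by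
    intro x i p h
    exact ⟨by omega, i, by simpa using h⟩
  -- canonical occurrence at level lMin
  have hseqex : ∀ x : Fin K, ∃ i : Fin d, (s i)[lMin s x - 1]? = some x :=
    fun x => (hlMin_mem x).2
  set seqOf : Fin K → Fin d := fun x => (hseqex x).choose with hseqOf
  have hseqspec : ∀ x : Fin K, (s (seqOf x))[lMin s x - 1]? = some x :=
    fun x => (hseqex x).choose_spec
  -- uniqueness of the occurrence of elements with totalCount ≤ 1
  have hcle : ∀ (x : Fin K) (j : Fin d), (s j).count x ≤ totalCount s x := by
    intro x j
    exact Finset.single_le_sum (f := fun j => (s j).count x)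
      (fun _ _ => Nat.zero_le _) (Finset.mem_univ j)
  have huniq : ∀ x : Fin K, totalCount s x ≤ 1 → ∀ (i : Fin d) (p : ℕ),
      (s i)[p]? = some x → i = seqOf x ∧ p = lMin s x - 1 := by
    intro x hx i p hp
    have h0 := hseqspec x
    have hi : i = seqOf x := by
      by_contra hne
      have h1 : 0 < (s i).count x := List.count_pos_iff.mpr (pcd_mem_of_getElem? hp)
      have h2 : 0 < (s (seqOf x)).count x := List.count_pos_iff.mpr (pcd_mem_of_getElem? h0)
      have hsum : (s i).count x + (s (seqOf x)).count x ≤ totalCount s x := by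
        have hsubs : ({i, seqOf x} : Finset (Fin d)) ⊆ Finset.univ := Finset.subset_univ _
        have hss := Finset.sum_le_sum_of_subset (f := fun j => (s j).count x) hsubs
        rwa [Finset.sum_pair hne] at hss
      omega
    subst hi
    refine ⟨rfl, ?_⟩
    by_contra hne
    have h2 := pcd_count_two hne hp h0
    have h3 := hcle x (seqOf x)
    omega
  -- main parameters
  set T : ℕ := α / 3 with hT
  have hT1 : 1 ≤ T := by omega
  set m : ℕ := α - T - 1 with hm
  set c2 : ℕ := α - 2 * T - 1 with hc2
  -- main finsets
  set Sh : Finset (Fin K) := univ.filter (fun x => lMin s x ≤ T) with hSh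
  set U : Finset (Fin K) :=
    univ.filter (fun x => totalCount s x ≤ 1 ∧ α - T < lMin s x) with hU
  set S' : Finset (Fin K) :=
    univ.filter (fun x => T < lMin s x ∧ ¬(totalCount s x ≤ 1 ∧ α - T < lMin s x)) with hS'
  set n' : ℕ := S'.card with hn'
  have hS'mem : ∀ x ∈ S', T < lMin s x ∧ ¬(totalCount s x ≤ 1 ∧ α - T < lMin s x) := by
    intro x hx
    rw [hS'] at hx
    exact (Finset.mem_filter.mp hx).2
  -- partition bound
  have hsplitK : K ≤ Sh.card + U.card + S'.card := by
    have hsub : (univ : Finset (Fin K)) ⊆ Sh ∪ U ∪ S' := by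
      intro x _
      by_cases h1 : lMin s x ≤ T
      · exact Finset.mem_union_left _ (Finset.mem_union_left _ (by
          rw [hSh]; exact Finset.mem_filter.mpr ⟨Finset.mem_univ _, h1⟩))
      · by_cases h2 : totalCount s x ≤ 1 ∧ α - T < lMin s x
        · exact Finset.mem_union_left _ (Finset.mem_union_right _ (by
            rw [hU]; exact Finset.mem_filter.mpr ⟨Finset.mem_univ _, h2⟩))
        · exact Finset.mem_union_right _ (by
            rw [hS']; exact Finset.mem_filter.mpr ⟨Finset.mem_univ _, by omega, h2⟩)
    have hle := Finset.card_le_card hsub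
    rw [Finset.card_univ, Fintype.card_fin] at hle
    have c1 := Finset.card_union_le (Sh ∪ U) S'
    have c2 := Finset.card_union_le Sh U
    omega
  -- |Sh| ≤ d * T
  have hShcard : Sh.card ≤ d * T := by
    have hinj : Sh.card ≤ ((univ : Finset (Fin d)) ×ˢ Finset.range T).card := by
      apply Finset.card_le_card_of_injOn (fun x => (seqOf x, lMin s x - 1))
      · intro x hx
        rw [hSh] at hx
        have hx' := (Finset.mem_filter.mp hx).2
        have := hlMin_pos x
        simp only [Finset.mem_coe, Finset.mem_product, Finset.mem_univ, true_and, Finset.mem_range]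
        omega
      · intro x _ y _ hxy
        have e1 : seqOf x = seqOf y := congrArg Prod.fst hxy
        have e2 : lMin s x - 1 = lMin s y - 1 := congrArg Prod.snd hxy
        have h1 := hseqspec x
        have h2 := hseqspec y
        rw [e1, e2] at h1
        rw [h1] at h2
        exact Option.some.inj h2
    simpa [Finset.card_product] using hinj
  -- |U| ≤ T
  have hUcard : U.card ≤ T := by
    have hUmem : ∀ u ∈ U, totalCount s u ≤ 1 ∧ α - T < lMin s u := by
      intro u hu
      rw [hU] at hu
      exact (Finset.mem_filter.mp hu).2
    have hsame : ∀ u ∈ U, ∀ v ∈ U, seqOf u = seqOf v := by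
      intro u hu v hv
      by_cases huv : u = v
      · rw [huv]
      obtain ⟨hu1, hu2⟩ := hUmem u hu
      obtain ⟨hv1, hv2⟩ := hUmem v hv
      obtain ⟨w, hw1, hw2⟩ := hex3 u v
      obtain ⟨i, i', i'', ℓ, ℓ', ℓ'', hsum, hcov⟩ :=
        htrip u v w huv (Ne.symm hw1) (Ne.symm hw2)
      have hget : ∀ (z : Fin K), totalCount s z ≤ 1 → ∀ (j : Fin d) (L : ℕ),
          z ∈ (s j).take L → j = seqOf z ∧ lMin s z ≤ L := by
        intro z hz j L hmem
        obtain ⟨p, hp, hsome⟩ := pcd_mem_take_iff.mp hmem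
        obtain ⟨hj, hpp⟩ := huniq z hz j p hsome
        have := hlMin_pos z
        exact ⟨hj, by omega⟩
      rcases hcov u (Or.inl rfl) with h1 | h1 | h1 <;>
        rcases hcov v (Or.inr (Or.inl rfl)) with h2 | h2 | h2 <;>
        first
          | exact ((hget u hu1 _ _ h1).1.symm.trans (hget v hv1 _ _ h2).1)
          | (exfalso
             have a1 := (hget u hu1 _ _ h1).2
             have a2 := (hget v hv1 _ _ h2).2
             omega)
    have hinjU : U.card ≤ (Finset.range T).card := by
      apply Finset.card_le_card_of_injOn (fun u => lMin s u - (α - T + 1))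
      · intro u hu
        obtain ⟨hu1, hu2⟩ := hUmem u hu
        have := hlMinα u
        simp only [Finset.mem_coe, Finset.mem_range]
        omega
      · intro u hu v hv huv
        have huv' : lMin s u - (α - T + 1) = lMin s v - (α - T + 1) := huv
        obtain ⟨hu1, hu2⟩ := hUmem u hu
        obtain ⟨hv1, hv2⟩ := hUmem v hv
        have hmm : lMin s u = lMin s v := by omega
        have h1 := hseqspec u
        have h2 := hseqspec v
        rw [hsame u hu v hv, hmm] at h1
        rw [h1] at h2
        exact Option.some.inj h2
    simpa using hinjU
  -- basic S' facts
  have hlMin_take : ∀ (x : Fin K) (j : Fin d) (L : ℕ), x ∈ (s j).take L → lMin s x ≤ L := by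
    intro x j L hx
    obtain ⟨p, hp, hsome⟩ := pcd_mem_take_iff.mp hx
    have := hlMin_le x (p + 1) (hslot_occ x j p hsome)
    omega
  have hdeep : ∀ x ∈ S', ∀ (j : Fin d) (q : ℕ), (s j)[q]? = some x → q + 1 ≤ α - T := by
    intro x hx j q hq
    obtain ⟨hx1, hx2⟩ := hS'mem x hx
    by_cases hcnt : totalCount s x ≤ 1
    · have h2 : lMin s x ≤ α - T := by
        by_contra hcon
        exact hx2 ⟨hcnt, by omega⟩
      obtain ⟨_, hpq⟩ := huniq x hcnt j q hq
      have := hlMin_pos x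
      omega
    · push_neg at hcnt
      have hmax := hlMax_ge x (q + 1) (hslot_occ x j q hq)
      have hsg := hsing x hcnt
      omega
  -- claim B building blocks
  have lem_two : ∀ {x y z : Fin K} {j j' : Fin d} {L L' : ℕ}, z ∈ S' →
      x ∈ (s j).take L → y ∈ (s j).take L → z ∈ (s j').take L' → L + L' ≤ α →
      AdjP s m x y := by
    intro x y z j j' L L' hz hx hy hz' hLL
    have h1 : T < lMin s z := (hS'mem z hz).1
    have h2 : lMin s z ≤ L' := hlMin_take z j' L' hz'
    have hLm : L ≤ m := by omega
    exact ⟨j, pcd_take_mono hLm hx, pcd_take_mono hLm hy⟩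
  have lem_three : ∀ {x y z : Fin K} {j : Fin d} {L : ℕ},
      x ∈ S' → y ∈ S' → z ∈ S' → x ≠ y → x ≠ z → y ≠ z →
      x ∈ (s j).take L → y ∈ (s j).take L → z ∈ (s j).take L →
      AdjP s m x y ∨ AdjP s m x z ∨ AdjP s m y z := by
    intro x y z j L hx hy hz hxy hxz hyz hx' hy' hz'
    obtain ⟨px, _, hpx⟩ := pcd_mem_take_iff.mp hx'
    obtain ⟨py, _, hpy⟩ := pcd_mem_take_iff.mp hy'
    obtain ⟨pz, _, hpz⟩ := pcd_mem_take_iff.mp hz'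
    have bx : px + 1 ≤ α - T := hdeep x hx j px hpx
    have bby : py + 1 ≤ α - T := hdeep y hy j py hpy
    have bz : pz + 1 ≤ α - T := hdeep z hz j pz hpz
    have dxy : px ≠ py := by
      intro h
      rw [h, hpy] at hpx
      exact hxy (Option.some.inj hpx).symm
    have dxz : px ≠ pz := by
      intro h
      rw [h, hpz] at hpx
      exact hxz (Option.some.inj hpx).symm
    have dyz : py ≠ pz := by
      intro h
      rw [h, hpz] at hpy
      exact hyz (Option.some.inj hpy).symm
    have mk : ∀ (a b : Fin K) (pa pb : ℕ), (s j)[pa]? = some a → (s j)[pb]? = some b →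
        pa < m → pb < m → AdjP s m a b := by
      intro a b pa pb ha hb hma hmb
      exact ⟨j, pcd_mem_take_iff.mpr ⟨pa, hma, ha⟩, pcd_mem_take_iff.mpr ⟨pb, hmb, hb⟩⟩
    rcases le_or_gt px py with h1 | h1 <;> rcases le_or_gt px pz with h2 | h2 <;>
      rcases le_or_gt py pz with h3 | h3 <;>
      first
        | exact Or.inl (mk x y px py hpx hpy (by omega) (by omega))
        | exact Or.inr (Or.inl (mk x z px pz hpx hpz (by omega) (by omega)))
        | exact Or.inr (Or.inr (mk y z py pz hpy hpz (by omega) (by omega)))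
        | omega
  have claimB : ∀ x y z : Fin K, x ∈ S' → y ∈ S' → z ∈ S' → x ≠ y → x ≠ z → y ≠ z →
      AdjP s m x y ∨ AdjP s m x z ∨ AdjP s m y z := by
    intro x y z hx hy hz hxy hxz hyz
    have hTx : T < lMin s x := (hS'mem x hx).1
    have hTy : T < lMin s y := (hS'mem y hy).1
    have hTz : T < lMin s z := (hS'mem z hz).1
    obtain ⟨i, i', i'', ℓ, ℓ', ℓ'', hsum, hcov⟩ := htrip x y z hxy hxz hyz
    rcases hcov x (Or.inl rfl) with h1 | h1 | h1 <;>
      rcases hcov y (Or.inr (Or.inl rfl)) with h2 | h2 | h2 <;>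
      rcases hcov z (Or.inr (Or.inr rfl)) with h3 | h3 | h3 <;>
      first
        | exact lem_three hx hy hz hxy hxz hyz h1 h2 h3
        | exact Or.inl (lem_two hz h1 h2 h3 (by omega))
        | exact Or.inr (Or.inl (lem_two hy h1 h3 h2 (by omega)))
        | exact Or.inr (Or.inr (lem_two hx h2 h3 h1 (by omega)))
        | (exfalso
           have a1 := hlMin_take x _ _ h1
           have a2 := hlMin_take y _ _ h2
           have a3 := hlMin_take z _ _ h3
           omega)
  -- Mantel-type argument
  set Pg : Finset (Fin K × Fin K) := S'.offDiag.filter (fun p => AdjP s m p.1 p.2) with hPg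
  set Pb : Finset (Fin K × Fin K) := S'.offDiag.filter (fun p => ¬ AdjP s m p.1 p.2) with hPb
  have hnle : n' ≤ n' * n' := by
    rcases Nat.eq_zero_or_pos n' with h | h
    · omega
    · exact Nat.le_mul_of_pos_left n' h
  have hsplitc : Pg.card + Pb.card + n' = n' * n' := by
    have h1 : Pg.card + Pb.card = S'.offDiag.card := by
      rw [hPg, hPb]
      exact Finset.card_filter_add_card_filter_not _
    have h2 : S'.offDiag.card = n' * n' - n' := by
      rw [Finset.offDiag_card, ← hn']
    omega
  have hmantel : 2 * Pb.card ≤ n' * n' := by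
    rcases Pb.eq_empty_or_nonempty with he | hne
    · rw [he]; simp
    · have hS'ne : S'.Nonempty := by
        obtain ⟨p, hp⟩ := hne
        rw [hPb] at hp
        exact ⟨p.1, (Finset.mem_offDiag.mp (Finset.mem_filter.mp hp).1).1⟩
      obtain ⟨x₀, hx₀, hmax⟩ := Finset.exists_max_image S'
        (fun u => (S'.filter (fun y => y ≠ u ∧ ¬ AdjP s m u y)).card) hS'ne
      set Nb : Finset (Fin K) := S'.filter (fun y => y ≠ x₀ ∧ ¬ AdjP s m x₀ y) with hNb
      set W : Finset (Fin K) := S' \ Nb with hW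
      have hNbsub : Nb ⊆ S' := Finset.filter_subset _ _
      have hWcard : W.card = n' - Nb.card := by
        rw [hW, hn']
        exact Finset.card_sdiff_of_subset hNbsub
      have hNble : Nb.card ≤ n' := Finset.card_le_card hNbsub
      have hWsub : W ⊆ S' := Finset.sdiff_subset
      have hcover : ∀ p ∈ Pb, p.1 ∈ W ∨ p.2 ∈ W := by
        rintro ⟨u, v⟩ hp
        rw [hPb] at hp
        obtain ⟨hod, hnadj⟩ := Finset.mem_filter.mp hp
        obtain ⟨hu, hv, huv⟩ := Finset.mem_offDiag.mp hod
        by_contra hcon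
        push_neg at hcon
        obtain ⟨hu', hv'⟩ := hcon
        have hUNb : u ∈ Nb := by
          by_contra h
          exact hu' (by rw [hW]; exact Finset.mem_sdiff.mpr ⟨hu, h⟩)
        have hVNb : v ∈ Nb := by
          by_contra h
          exact hv' (by rw [hW]; exact Finset.mem_sdiff.mpr ⟨hv, h⟩)
        rw [hNb] at hUNb hVNb
        obtain ⟨hune, hunadj⟩ := (Finset.mem_filter.mp hUNb).2
        obtain ⟨hvne, hvnadj⟩ := (Finset.mem_filter.mp hVNb).2
        rcases claimB x₀ u v hx₀ hu hv (Ne.symm hune) (Ne.symm hvne) huv with h | h | h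
        · exact hunadj h
        · exact hvnadj h
        · exact hnadj h
      have hPbcard : Pb.card ≤ 2 * (W.card * Nb.card) := by
        have hsplit2 : Pb ⊆ Pb.filter (fun p => p.1 ∈ W) ∪ Pb.filter (fun p => p.2 ∈ W) := by
          intro p hp
          rcases hcover p hp with h | h
          · exact Finset.mem_union_left _ (Finset.mem_filter.mpr ⟨hp, h⟩)
          · exact Finset.mem_union_right _ (Finset.mem_filter.mpr ⟨hp, h⟩)
        have hB1 : (Pb.filter (fun p => p.1 ∈ W)).card ≤ W.card * Nb.card := by
          have hsub : Pb.filter (fun p => p.1 ∈ W) ⊆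
              W.biUnion (fun u => ({u} : Finset (Fin K)) ×ˢ
                (S'.filter (fun y => y ≠ u ∧ ¬ AdjP s m u y))) := by
            rintro ⟨u, v⟩ hp
            obtain ⟨hpb, huW⟩ := Finset.mem_filter.mp hp
            rw [hPb] at hpb
            obtain ⟨hod, hnadj⟩ := Finset.mem_filter.mp hpb
            obtain ⟨hu, hv, huv⟩ := Finset.mem_offDiag.mp hod
            refine Finset.mem_biUnion.mpr ⟨u, huW, ?_⟩
            refine Finset.mem_product.mpr ⟨Finset.mem_singleton_self u, ?_⟩
            exact Finset.mem_filter.mpr ⟨hv, Ne.symm huv, hnadj⟩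
          refine (Finset.card_le_card hsub).trans ?_
          refine Finset.card_biUnion_le.trans ?_
          have hbnd : ∀ u ∈ W, (({u} : Finset (Fin K)) ×ˢ
              (S'.filter (fun y => y ≠ u ∧ ¬ AdjP s m u y))).card ≤ Nb.card := by
            intro u hu
            rw [Finset.card_product, Finset.card_singleton, one_mul]
            exact hmax u (hWsub hu)
          calc ∑ u ∈ W, (({u} : Finset (Fin K)) ×ˢ
                (S'.filter (fun y => y ≠ u ∧ ¬ AdjP s m u y))).card
              ≤ ∑ _u ∈ W, Nb.card := Finset.sum_le_sum hbnd
            _ = W.card * Nb.card := by rw [Finset.sum_const, smul_eq_mul]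
        have hB2 : (Pb.filter (fun p => p.2 ∈ W)).card ≤ W.card * Nb.card := by
          have hsub : Pb.filter (fun p => p.2 ∈ W) ⊆
              W.biUnion (fun v => (S'.filter (fun y => y ≠ v ∧ ¬ AdjP s m v y)) ×ˢ
                ({v} : Finset (Fin K))) := by
            rintro ⟨u, v⟩ hp
            obtain ⟨hpb, hvW⟩ := Finset.mem_filter.mp hp
            rw [hPb] at hpb
            obtain ⟨hod, hnadj⟩ := Finset.mem_filter.mp hpb
            obtain ⟨hu, hv, huv⟩ := Finset.mem_offDiag.mp hod
            refine Finset.mem_biUnion.mpr ⟨v, hvW, ?_⟩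
            refine Finset.mem_product.mpr ⟨?_, Finset.mem_singleton_self v⟩
            exact Finset.mem_filter.mpr ⟨hu, huv, fun h => hnadj (adjP_symm h)⟩
          refine (Finset.card_le_card hsub).trans ?_
          refine Finset.card_biUnion_le.trans ?_
          have hbnd : ∀ v ∈ W, ((S'.filter (fun y => y ≠ v ∧ ¬ AdjP s m v y)) ×ˢ
              ({v} : Finset (Fin K))).card ≤ Nb.card := by
            intro v hv
            rw [Finset.card_product, Finset.card_singleton, mul_one]
            exact hmax v (hWsub hv)
          calc ∑ v ∈ W, ((S'.filter (fun y => y ≠ v ∧ ¬ AdjP s m v y)) ×ˢ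
                ({v} : Finset (Fin K))).card
              ≤ ∑ _v ∈ W, Nb.card := Finset.sum_le_sum hbnd
            _ = W.card * Nb.card := by rw [Finset.sum_const, smul_eq_mul]
        have hx1 := Finset.card_le_card hsplit2
        have hx2 := Finset.card_union_le (Pb.filter (fun p => p.1 ∈ W))
          (Pb.filter (fun p => p.2 ∈ W))
        omega
      have hab : W.card + Nb.card = n' := by omega
      have hsq : 4 * (W.card * Nb.card) ≤ (W.card + Nb.card) * (W.card + Nb.card) := by
        nlinarith [two_mul_le_add_sq W.card Nb.card]
      rw [hab] at hsq
      omega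
  -- bound the number of adjacent (ordered) pairs
  have hd0 : 0 < d := by omega
  have hPgcard : Pg.card ≤ d * (c2 * c2 - c2) := by
    set posIn : Fin K → Fin d → ℕ := fun u j => sInf {p | (s j)[p]? = some u} with hposIn
    have hposspec : ∀ (u : Fin K) (j : Fin d), T < lMin s u → ∀ (p : ℕ), p < m →
        (s j)[p]? = some u →
        (s j)[posIn u j]? = some u ∧ T ≤ posIn u j ∧ posIn u j < m := by
      intro u j hTu p hp hsome
      have hne : {q | (s j)[q]? = some u}.Nonempty := ⟨p, hsome⟩
      have hmem : (s j)[posIn u j]? = some u := Nat.sInf_mem hne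
      have hle : posIn u j ≤ p := Nat.sInf_le hsome
      have hTle : T ≤ posIn u j := by
        have hocc' := hslot_occ u j (posIn u j) hmem
        have := hlMin_le u _ hocc'
        omega
      exact ⟨hmem, hTle, by omega⟩
    set F : Fin K × Fin K → Fin d × (ℕ × ℕ) := fun p =>
      if h : AdjP s m p.1 p.2 then
        (h.choose, (posIn p.1 h.choose - T, posIn p.2 h.choose - T))
      else (⟨0, hd0⟩, (0, 0)) with hF
    have hinj : Pg.card ≤ ((univ : Finset (Fin d)) ×ˢ (Finset.range c2).offDiag).card := by
      apply Finset.card_le_card_of_injOn F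
      · rintro ⟨u, v⟩ hp
        rw [hPg] at hp
        obtain ⟨hod, hadj⟩ := Finset.mem_filter.mp hp
        obtain ⟨hu, hv, huv⟩ := Finset.mem_offDiag.mp hod
        rw [hF]
        simp only [dif_pos hadj]
        obtain ⟨hu', hv'⟩ := hadj.choose_spec
        obtain ⟨pu, hpu, hsu⟩ := pcd_mem_take_iff.mp hu'
        obtain ⟨pv, hpv, hsv⟩ := pcd_mem_take_iff.mp hv'
        obtain ⟨hs1, hT1u, hm1⟩ := hposspec u _ (hS'mem u hu).1 pu hpu hsu
        obtain ⟨hs2, hT2v, hm2⟩ := hposspec v _ (hS'mem v hv).1 pv hpv hsv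
        have hneq : posIn u hadj.choose ≠ posIn v hadj.choose := by
          intro h
          rw [h, hs2] at hs1
          exact huv (Option.some.inj hs1).symm
        simp only [Finset.mem_coe, Finset.mem_product, Finset.mem_univ, true_and, Finset.mem_offDiag,
          Finset.mem_range]
        refine ⟨by omega, by omega, by omega⟩
      · intro p hp q hq heq
        have hp' : p ∈ Pg := hp
        have hq' : q ∈ Pg := hq
        rw [hPg] at hp' hq'
        obtain ⟨hodp, hadjp⟩ := Finset.mem_filter.mp hp'
        obtain ⟨hodq, hadjq⟩ := Finset.mem_filter.mp hq'
        obtain ⟨hp1, hp2, hpne⟩ := Finset.mem_offDiag.mp hodp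
        obtain ⟨hq1, hq2, hqne⟩ := Finset.mem_offDiag.mp hodq
        rw [hF] at heq
        simp only [dif_pos hadjp, dif_pos hadjq] at heq
        have ej : hadjp.choose = hadjq.choose := congrArg Prod.fst heq
        obtain ⟨hu', hv'⟩ := hadjp.choose_spec
        obtain ⟨pu, hpu, hsu⟩ := pcd_mem_take_iff.mp hu'
        obtain ⟨pv, hpv, hsv⟩ := pcd_mem_take_iff.mp hv'
        obtain ⟨hs1, hT1u, hm1⟩ := hposspec p.1 _ (hS'mem p.1 hp1).1 pu hpu hsu
        obtain ⟨hs2, hT2v, hm2⟩ := hposspec p.2 _ (hS'mem p.2 hp2).1 pv hpv hsv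
        obtain ⟨hu2', hv2'⟩ := hadjq.choose_spec
        obtain ⟨pu2, hpu2, hsu2⟩ := pcd_mem_take_iff.mp hu2'
        obtain ⟨pv2, hpv2, hsv2⟩ := pcd_mem_take_iff.mp hv2'
        obtain ⟨hs12, hT1u2, hm12⟩ := hposspec q.1 _ (hS'mem q.1 hq1).1 pu2 hpu2 hsu2
        obtain ⟨hs22, hT2v2, hm22⟩ := hposspec q.2 _ (hS'mem q.2 hq2).1 pv2 hpv2 hsv2
        have e1 : posIn p.1 hadjp.choose - T = posIn q.1 hadjq.choose - T :=
          congrArg (fun z : Fin d × (ℕ × ℕ) => z.2.1) heq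
        have e2 : posIn p.2 hadjp.choose - T = posIn q.2 hadjq.choose - T :=
          congrArg (fun z : Fin d × (ℕ × ℕ) => z.2.2) heq
        have e1' : posIn p.1 hadjp.choose = posIn q.1 hadjq.choose := by omega
        have e2' : posIn p.2 hadjp.choose = posIn q.2 hadjq.choose := by omega
        rw [e1', ej, hs12] at hs1
        rw [e2', ej, hs22] at hs2
        have eu : p.1 = q.1 := (Option.some.inj hs1).symm
        have ev : p.2 = q.2 := (Option.some.inj hs2).symm
        exact Prod.ext eu ev
    have hcard : ((univ : Finset (Fin d)) ×ˢ (Finset.range c2).offDiag).card =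
        d * (c2 * c2 - c2) := by
      rw [Finset.card_product, Finset.card_univ, Fintype.card_fin, Finset.offDiag_card,
        Finset.card_range]
    rw [hcard] at hinj
    exact hinj
  -- the quadratic bound on n'
  have hF2nat : n' * n' ≤ 2 * n' + 2 * (d * (c2 * c2 - c2)) := by
    have h1 : n' * n' ≤ 2 * Pg.card + 2 * n' := by omega
    linarith [hPgcard]
  -- real arithmetic
  have hd3R : (3 : ℝ) ≤ (d : ℝ) := by exact_mod_cast hd
  have hd0R : (0 : ℝ) < (d : ℝ) := by linarith
  set x : ℝ := Real.sqrt (2 / (d : ℝ)) with hxdef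
  have hx0 : 0 ≤ x := Real.sqrt_nonneg _
  have hxx : x * x = 2 / (d : ℝ) := Real.mul_self_sqrt (by positivity)
  have hdxx : (d : ℝ) * (x * x) = 2 := by
    rw [hxx]
    field_simp
  have h2d : ((d : ℝ) * x) * ((d : ℝ) * x) = 2 * (d : ℝ) := by
    calc ((d : ℝ) * x) * ((d : ℝ) * x) = (d : ℝ) * ((d : ℝ) * (x * x)) := by ring
      _ = (d : ℝ) * 2 := by rw [hdxx]
      _ = 2 * d := by ring
  have hx1 : x < 1 := pcd_sqrt_lt_one hd
  have hdx0 : 0 ≤ (d : ℝ) * x := mul_nonneg hd0R.le hx0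
  -- cast facts
  set rr : ℕ := α - 3 * T with hrr
  have hrrnat : 3 * T + rr = α ∧ rr ≤ 2 := by omega
  have hKnat : K ≤ d * T + T + n' := by
    have := Nat.add_le_add (Nat.add_le_add hShcard hUcard) (le_refl n')
    omega
  have hKR : (K : ℝ) ≤ (d : ℝ) * (T : ℝ) + (T : ℝ) + (n' : ℝ) := by
    have := hKnat
    push_cast
    exact_mod_cast this
  have hT1R : (1 : ℝ) ≤ (T : ℝ) := by exact_mod_cast hT1
  have hαR : (α : ℝ) = 3 * (T : ℝ) + (rr : ℝ) := by
    have := hrrnat.1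
    push_cast
    exact_mod_cast congrArg (Nat.cast : ℕ → ℝ) this.symm
  have hrrR : (rr : ℝ) ≤ 2 := by exact_mod_cast hrrnat.2
  have hrr0R : (0 : ℝ) ≤ (rr : ℝ) := Nat.cast_nonneg _
  have hα0R : (0 : ℝ) ≤ (α : ℝ) := Nat.cast_nonneg _
  -- the key bound : 3(T + n') ≤ (dx + 2) α
  have hR1 : 3 * ((T : ℝ) + (n' : ℝ)) ≤ ((d : ℝ) * x + 2) * (α : ℝ) := by
    have hdx1 : (1 : ℝ) ≤ (d : ℝ) * x := by nlinarith [h2d, hd3R, hdx0]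
    rcases Nat.eq_zero_or_pos c2 with hc20 | hc2pos
    · have hTrr : T = 1 ∧ rr = 0 := by omega
      have hn2 : n' ≤ 2 := by
        have h0 : n' * n' ≤ 2 * n' := by
          have := hF2nat
          rw [hc20] at this
          simpa using this
        by_contra hcon
        push_neg at hcon
        have := Nat.mul_le_mul_right n' hcon
        omega
      have hn2R : (n' : ℝ) ≤ 2 := by exact_mod_cast hn2
      have hTR : (T : ℝ) = 1 := by exact_mod_cast congrArg (Nat.cast : ℕ → ℝ) hTrr.1
      have hrr0 : (rr : ℝ) = 0 := by exact_mod_cast congrArg (Nat.cast : ℕ → ℝ) hTrr.2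
      rw [hαR, hTR, hrr0]
      nlinarith [hdx1]
    · have hc2R1 : (1 : ℝ) ≤ (c2 : ℝ) := by exact_mod_cast hc2pos
      have hc2cast : (c2 : ℝ) = (T : ℝ) + (rr : ℝ) - 1 := by
        have h : c2 + 1 = T + rr := by omega
        have h' := congrArg (Nat.cast : ℕ → ℝ) h
        push_cast at h'
        linarith
      have hF2R : (n' : ℝ) * (n' : ℝ) ≤
          2 * (n' : ℝ) + 2 * ((d : ℝ) * ((c2 : ℝ) * ((c2 : ℝ) - 1))) := by
        have h1 : c2 ≤ c2 * c2 := Nat.le_mul_of_pos_left c2 hc2pos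
        have h2 : ((c2 * c2 - c2 : ℕ) : ℝ) = (c2 : ℝ) * ((c2 : ℝ) - 1) := by
          push_cast [Nat.cast_sub h1]
          ring
        calc (n' : ℝ) * (n' : ℝ) = ((n' * n' : ℕ) : ℝ) := by push_cast; ring
          _ ≤ ((2 * n' + 2 * (d * (c2 * c2 - c2)) : ℕ) : ℝ) := by exact_mod_cast hF2nat
          _ = 2 * (n' : ℝ) + 2 * ((d : ℝ) * (((c2 * c2 - c2 : ℕ)) : ℝ)) := by push_cast; ring
          _ = 2 * (n' : ℝ) + 2 * ((d : ℝ) * ((c2 : ℝ) * ((c2 : ℝ) - 1))) := by rw [h2]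
      have hW0 : 0 ≤ (d : ℝ) * x * ((c2 : ℝ) - 1 / 2) :=
        mul_nonneg hdx0 (by linarith)
      have hWsq : ((d : ℝ) * x * ((c2 : ℝ) - 1 / 2)) * ((d : ℝ) * x * ((c2 : ℝ) - 1 / 2)) =
          2 * (d : ℝ) * ((c2 : ℝ) * ((c2 : ℝ) - 1)) + (d : ℝ) / 2 := by
        have h : ((d : ℝ) * x * ((c2 : ℝ) - 1 / 2)) * ((d : ℝ) * x * ((c2 : ℝ) - 1 / 2)) =
            (((d : ℝ) * x) * ((d : ℝ) * x)) * (((c2 : ℝ) - 1 / 2) * ((c2 : ℝ) - 1 / 2)) := by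
          ring
        rw [h, h2d]
        ring
      have hkey : (n' : ℝ) ≤ 1 + (d : ℝ) * x * ((c2 : ℝ) - 1 / 2) := by
        by_contra hcon
        push_neg at hcon
        have h3 : ((d : ℝ) * x * ((c2 : ℝ) - 1 / 2)) * ((d : ℝ) * x * ((c2 : ℝ) - 1 / 2)) <
            ((n' : ℝ) - 1) * ((n' : ℝ) - 1) := by nlinarith
        nlinarith [hF2R, hWsq, hd3R]
      rw [hαR]
      have hkey' : (n' : ℝ) ≤ 1 + (d : ℝ) * x * ((T : ℝ) + (rr : ℝ) - 3 / 2) := by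
        rw [hc2cast] at hkey
        calc (n' : ℝ) ≤ 1 + (d : ℝ) * x * ((T : ℝ) + (rr : ℝ) - 1 - 1 / 2) := hkey
          _ = 1 + (d : ℝ) * x * ((T : ℝ) + (rr : ℝ) - 3 / 2) := by ring
      nlinarith [hkey', hT1R, hrrR, hrr0R, hdx0,
        mul_nonneg hdx0 (show (0 : ℝ) ≤ 9 / 2 - 2 * (rr : ℝ) by linarith)]
  -- final assembly
  have hTαR : 3 * (T : ℝ) ≤ (α : ℝ) := by
    have h : 3 * T ≤ α := by omega
    exact_mod_cast h
  have h1x : (0 : ℝ) ≤ 1 - x := by linarith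
  have e1 : (K : ℝ) * (3 * (1 - x)) ≤ ((d : ℝ) * T + T + n') * (3 * (1 - x)) :=
    mul_le_mul_of_nonneg_right hKR (by linarith)
  have e2 : ((d : ℝ) * T + T + n') * (3 * (1 - x)) =
      (d : ℝ) * (3 * (T : ℝ)) * (1 - x) + (3 * ((T : ℝ) + n')) * (1 - x) := by ring
  have e3 : (3 * ((T : ℝ) + n')) * (1 - x) ≤ (((d : ℝ) * x + 2) * α) * (1 - x) :=
    mul_le_mul_of_nonneg_right hR1 h1x
  have e4 : (d : ℝ) * (3 * (T : ℝ)) * (1 - x) ≤ (d : ℝ) * α * (1 - x) := by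
    have : (d : ℝ) * (3 * (T : ℝ)) ≤ (d : ℝ) * α := by
      exact mul_le_mul_of_nonneg_left hTαR hd0R.le
    exact mul_le_mul_of_nonneg_right this h1x
  have e6 : ((d : ℝ) * x + 2) * (1 - x) ≤ (d : ℝ) * x := by nlinarith [hdxx, hx0]
  have e7 : (((d : ℝ) * x + 2) * α) * (1 - x) ≤ ((d : ℝ) * x) * α := by
    calc (((d : ℝ) * x + 2) * α) * (1 - x) = (((d : ℝ) * x + 2) * (1 - x)) * α := by ring
      _ ≤ ((d : ℝ) * x) * α := mul_le_mul_of_nonneg_right e6 hα0R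
  have e8 : (d : ℝ) * α * (1 - x) + ((d : ℝ) * x) * α = (d : ℝ) * α := by ring
  linarith

theorem stmt_13 (d : ℕ) (hd : 3 ≤ d) :
    ∀ r ∈ gammaSet d, r ≤ (d : ℝ) / (3 * (1 - Real.sqrt (2 / (d : ℝ)))) := by
  intro r hr
  obtain ⟨K, α, s, hK, hα, ⟨htrip, hsing⟩, rfl⟩ := hr
  have hα0R : (0 : ℝ) < (α : ℝ) := by exact_mod_cast hα
  have hden : (0 : ℝ) < 3 * (1 - Real.sqrt (2 / (d : ℝ))) := by
    have := pcd_sqrt_lt_one hd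
    linarith
  rw [div_le_div_iff₀ hα0R hden]
  exact pcd_core d K α hd hK s htrip hsing
end

section
/- Dimension-extension of prefix covering designs: if s_1,...,s_d is the (d, (nk+v')d, 3nk−(2n−3)v') prefix covering design obtained from the replicated covering-design construction (with v'=v/d, every element's primary position in the first nk+v' levels of some sequence), then for every d' > d one can extend to a (d', K', α') prefix covering design with K' = (nk+v')d + (nk−(2n−1)v')(d'−d) and α' ≤ 3nk−(2n−3)v', by adding d'−d new sequences each consisting of nk−(2n−1)v' fresh distinct elements. -/
open scoped BigOperators

/-- Helper: membership in a prefix from an indexed lookup. -/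
lemma mem_take_of_getElem?_aux {α : Type*} {l : List α} {m n : ℕ} {x : α}
    (h : l[m]? = some x) (hmn : m < n) : x ∈ l.take n := by
  apply List.mem_of_getElem? (i := m)
  rw [List.getElem?_take, if_pos hmn, h]

/-- Helper: uniqueness of base-`f` decomposition. -/
lemma base_decomp_unique {f j j' t t' : ℕ} (ht : t < f) (ht' : t' < f)
    (h : j * f + t = j' * f + t') : j = j' ∧ t = t' := by
  have hjj : j = j' := by
    rcases lt_trichotomy j j' with hlt | heq | hgt
    · exfalso
      have h1 : (j + 1) * f ≤ j' * f := Nat.mul_le_mul_right f hlt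
      rw [Nat.succ_mul] at h1
      omega
    · exact heq
    · exfalso
      have h1 : (j' + 1) * f ≤ j * f := Nat.mul_le_mul_right f hgt
      rw [Nat.succ_mul] at h1
      omega
  subst hjj
  omega

/-- The extended family of sequences: old sequences are cast, new sequences consist of
fresh elements. -/
def extSeq {d d' K K' f : ℕ} (hdd' : d ≤ d') (hKK' : K ≤ K')
    (hE : K + (d' - d) * f ≤ K') (s : Fin d → List (Fin K)) (i : Fin d') : List (Fin K') :=
  if h : i.val < d then (s ⟨i.val, h⟩).map (Fin.castLE hKK')
  else List.ofFn (fun t : Fin f =>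
    pcdElem K (d' - d) f K' hE ⟨i.val - d, by have := i.isLt; omega⟩ t)

theorem stmt_17 (d d' n k v' K α f : ℕ) (hd : 3 ≤ d) (hdd' : d < d') (hn : 1 ≤ n)
    (hvk : 2 * v' ≤ k)
    (hK : K = (n * k + v') * d)
    (hα : α + 2 * n * v' = 3 * n * k + 3 * v')
    (hf : f + (2 * n - 1) * v' = n * k)
    (s : Fin d → List (Fin K)) (hpcd : IsPCD d K α s)
    (hprim : ∀ x : Fin K, lMin s x ≤ n * k + v') :
    ∃ s' : Fin d' → List (Fin (K + f * (d' - d))),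
      IsPCD d' (K + f * (d' - d)) α s' := by
  classical
  obtain ⟨L, hL⟩ : ∃ L, L = n * k + v' := ⟨_, rfl⟩
  -- arithmetic facts
  have harith : f ≤ L ∧ f + 2 * L = α := by
    have h1 : (2 * n - 1) * v' = 2 * (n * v') - v' := by
      rw [Nat.sub_mul, one_mul, Nat.mul_assoc]
    have hv2 : v' ≤ n * v' := Nat.le_mul_of_pos_left v' hn
    have hα' : α + 2 * (n * v') = 3 * (n * k) + 3 * v' := by
      rw [← Nat.mul_assoc]
      have : 3 * (n * k) = 3 * n * k := by ring
      rw [this]; exact hα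
    have hf' : f + (2 * (n * v') - v') = n * k := by rw [← h1]; exact hf
    obtain ⟨A, hA⟩ : ∃ A, A = n * k := ⟨_, rfl⟩
    obtain ⟨B, hB⟩ : ∃ B, B = n * v' := ⟨_, rfl⟩
    rw [← hB] at hv2
    rw [← hA, ← hB] at hα'
    rw [← hA, ← hB] at hf'
    rw [← hA] at hL
    omega
  obtain ⟨hfL, hkey⟩ := harith
  have hprim' : ∀ x : Fin K, lMin s x ≤ L := by rw [hL]; exact hprim
  have hKL : K = L * d := by rw [hL]; exact hK
  set K' := K + f * (d' - d) with hK'def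
  have hgKK' : K ≤ K' := Nat.le_add_right _ _
  have hE : K + (d' - d) * f ≤ K' := by rw [Nat.mul_comm]
  set g : Fin K → Fin K' := Fin.castLE hgKK' with hg
  have hginj : Function.Injective g := Fin.castLE_injective _
  set s' : Fin d' → List (Fin K') := extSeq hdd'.le hgKK' hE s with hs'
  have hs'old : ∀ (i : Fin d') (h : i.val < d), s' i = (s ⟨i.val, h⟩).map g := by
    intro i h; rw [hs']; unfold extSeq; rw [dif_pos h]
  have hs'new : ∀ (i : Fin d') (h : ¬ i.val < d),
      s' i = List.ofFn (fun t : Fin f =>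
        pcdElem K (d' - d) f K' hE ⟨i.val - d, by have := i.isLt; omega⟩ t) := by
    intro i h; rw [hs']; unfold extSeq; rw [dif_neg h]
  have hEval : ∀ (j : Fin (d' - d)) (t : Fin f),
      (pcdElem K (d' - d) f K' hE j t).val = K + (j.val * f + t.val) := fun _ _ => rfl
  -- members of old sequences have small values; new have big values
  have hmemold : ∀ (i : Fin d') (h : i.val < d) (x : Fin K'), x ∈ s' i → x.val < K := by
    intro i h x hx
    rw [hs'old i h] at hx
    obtain ⟨y, _, rfl⟩ := List.mem_map.mp hx
    exact y.isLt
  -- every old element sits in the first L levels of some old sequence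
  have hcoverold : ∀ x' : Fin K, ∃ i : Fin d, x' ∈ (s i).take L := by
    intro x'
    -- K ≥ 3
    have hKpos : 0 < K := lt_of_le_of_lt (Nat.zero_le _) x'.isLt
    have hLpos : 0 < L := by
      rcases Nat.eq_zero_or_pos L with h0 | h; · rw [h0] at hKL; omega
      · exact h
    have hK3 : 3 ≤ K := by
      have : d ≤ L * d := Nat.le_mul_of_pos_left d hLpos
      omega
    -- x' occurs somewhere
    have hocc : {ℓ | OccursAt s x' ℓ}.Nonempty := by
      have hcard : 1 < ((Finset.univ : Finset (Fin K)) \ {x'}).card := by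
        rw [Finset.card_sdiff_of_subset (by simp)]
        simp only [Finset.card_univ, Fintype.card_fin, Finset.card_singleton]
        omega
      obtain ⟨b, hbmem, c, hcmem, hbc⟩ := Finset.one_lt_card.mp hcard
      have hbx : b ≠ x' := by simpa using (Finset.mem_sdiff.mp hbmem).2
      have hcx : c ≠ x' := by simpa using (Finset.mem_sdiff.mp hcmem).2
      obtain ⟨i, i', i'', ℓ, ℓ', ℓ'', _, hcov⟩ :=
        hpcd.1 x' b c hbx.symm hcx.symm hbc
      have hx := hcov x' (Or.inl rfl)
      have : ∃ (j : Fin d), x' ∈ s j := by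
        rcases hx with h | h | h
        exacts [⟨i, List.mem_of_mem_take h⟩, ⟨i', List.mem_of_mem_take h⟩,
          ⟨i'', List.mem_of_mem_take h⟩]
      obtain ⟨j, hj⟩ := this
      obtain ⟨m, hm, heq⟩ := List.getElem_of_mem hj
      refine ⟨m + 1, ⟨by omega, j, ?_⟩⟩
      simp only [Nat.add_sub_cancel]
      exact List.getElem?_eq_some_iff.mpr ⟨hm, heq⟩
    have hmem := Nat.sInf_mem hocc
    obtain ⟨h1, i, hget⟩ := hmem
    have hle := hprim' x'
    unfold lMin at hle
    refine ⟨i, mem_take_of_getElem?_aux hget (by omega)⟩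
  -- decomposition of new elements
  have hnewdecomp : ∀ x : Fin K', K ≤ x.val →
      ∃ (j t : ℕ), j < d' - d ∧ t < f ∧ x.val = K + (j * f + t) := by
    intro x hx
    have hxlt : x.val < K + f * (d' - d) := by rw [← hK'def]; exact x.isLt
    have hf0 : 0 < f := by
      rcases Nat.eq_zero_or_pos f with h0 | h; · rw [h0, Nat.zero_mul] at hxlt; omega
      · exact h
    have hdm := Nat.div_add_mod (x.val - K) f
    have hcomm : f * ((x.val - K) / f) = ((x.val - K) / f) * f := Nat.mul_comm _ _
    have htf : (x.val - K) % f < f := Nat.mod_lt _ hf0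
    have hxval : x.val = K + (((x.val - K) / f) * f + (x.val - K) % f) := by omega
    have hjd : (x.val - K) / f < d' - d := by
      by_contra hcon
      push_neg at hcon
      have h2 : f * (d' - d) ≤ ((x.val - K) / f) * f := by
        rw [Nat.mul_comm]; exact Nat.mul_le_mul_right f hcon
      omega
    exact ⟨_, _, hjd, htf, hxval⟩
  -- membership of a new element in its own (full) new sequence
  have hcovernew : ∀ x : Fin K', K ≤ x.val → ∃ i : Fin d', x ∈ (s' i).take f := by
    intro x hx
    obtain ⟨j, t, hjd, htf, hxval⟩ := hnewdecomp x hx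
    refine ⟨⟨d + j, by omega⟩, ?_⟩
    have hnotlt : ¬ ((⟨d + j, by omega⟩ : Fin d').val < d) := by simp
    rw [hs'new _ hnotlt]
    have hget : (List.ofFn (fun t' : Fin f =>
        pcdElem K (d' - d) f K' hE ⟨(⟨d + j, by omega⟩ : Fin d').val - d, by
          have := (⟨d + j, by omega⟩ : Fin d').isLt; omega⟩ t'))[t]? = some x := by
      rw [List.getElem?_ofFn]
      rw [dif_pos htf]
      congr 1
      apply Fin.ext
      rw [hEval]
      simp only [Nat.add_sub_cancel_left]
      omega
    exact mem_take_of_getElem?_aux hget htf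
  -- uniform covering: each element is in a short prefix
  have hcov : ∀ x : Fin K', ∃ (i : Fin d') (ℓ : ℕ),
      (ℓ ≤ if x.val < K then L else f) ∧ x ∈ (s' i).take ℓ := by
    intro x
    by_cases hx : x.val < K
    · rw [if_pos hx]
      obtain ⟨i, hi⟩ := hcoverold ⟨x.val, hx⟩
      refine ⟨Fin.castLE hdd'.le i, L, le_refl _, ?_⟩
      rw [hs'old _ (show (Fin.castLE hdd'.le i).val < d from i.isLt)]
      simp only [Fin.coe_castLE, Fin.eta]
      rw [← List.map_take]
      refine List.mem_map.mpr ⟨⟨x.val, hx⟩, hi, ?_⟩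
      apply Fin.ext; rfl
    · rw [if_neg hx]
      obtain ⟨i, hi⟩ := hcovernew x (le_of_not_gt hx)
      exact ⟨i, f, le_refl _, hi⟩
  refine ⟨s', ?_, ?_⟩
  · -- Triplet condition
    intro a b c hab hac hbc
    by_cases hall : a.val < K ∧ b.val < K ∧ c.val < K
    · obtain ⟨ha, hb, hc⟩ := hall
      set a' : Fin K := ⟨a.val, ha⟩ with ha'
      set b' : Fin K := ⟨b.val, hb⟩ with hb'
      set c' : Fin K := ⟨c.val, hc⟩ with hc'
      have hga : g a' = a := Fin.ext rfl
      have hgb : g b' = b := Fin.ext rfl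
      have hgc : g c' = c := Fin.ext rfl
      obtain ⟨i, i', i'', ℓ, ℓ', ℓ'', hsum, hcover⟩ :=
        hpcd.1 a' b' c'
          (fun h => hab (by rw [← hga, ← hgb, h]))
          (fun h => hac (by rw [← hga, ← hgc, h]))
          (fun h => hbc (by rw [← hgb, ← hgc, h]))
      have hlift : ∀ (j : Fin d) (m : ℕ) (y : Fin K),
          y ∈ (s j).take m → g y ∈ (s' (Fin.castLE hdd'.le j)).take m := by
        intro j m y hy
        rw [hs'old _ (show (Fin.castLE hdd'.le j).val < d from j.isLt)]
        simp only [Fin.coe_castLE, Fin.eta]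
        rw [← List.map_take]
        exact List.mem_map.mpr ⟨y, hy, rfl⟩
      refine ⟨Fin.castLE hdd'.le i, Fin.castLE hdd'.le i', Fin.castLE hdd'.le i'',
        ℓ, ℓ', ℓ'', hsum, ?_⟩
      intro x hx
      have hxK : x.val < K := by rcases hx with rfl | rfl | rfl <;> assumption
      set x' : Fin K := ⟨x.val, hxK⟩ with hx'
      have hgx : g x' = x := Fin.ext rfl
      have hx'abc : x' = a' ∨ x' = b' ∨ x' = c' := by
        rcases hx with rfl | rfl | rfl
        · exact Or.inl rfl
        · exact Or.inr (Or.inl rfl)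
        · exact Or.inr (Or.inr rfl)
      rcases hcover x' hx'abc with h | h | h
      · exact Or.inl (hgx ▸ hlift i ℓ x' h)
      · exact Or.inr (Or.inl (hgx ▸ hlift i' ℓ' x' h))
      · exact Or.inr (Or.inr (hgx ▸ hlift i'' ℓ'' x' h))
    · -- at least one new element
      obtain ⟨ia, la, hla, hmema⟩ := hcov a
      obtain ⟨ib, lb, hlb, hmemb⟩ := hcov b
      obtain ⟨ic, lc, hlc, hmemc⟩ := hcov c
      refine ⟨ia, ib, ic, la, lb, lc, ?_, ?_⟩
      · have hle : ∀ {y : Fin K'} {l : ℕ}, (l ≤ if y.val < K then L else f) → l ≤ L := by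
          intro y l h
          split at h
          · exact h
          · exact le_trans h hfL
        have h1 := hle hla
        have h2 := hle hlb
        have h3 := hle hlc
        have hone : la ≤ f ∨ lb ≤ f ∨ lc ≤ f := by
          by_contra hcon
          push_neg at hcon
          apply hall
          have ha : a.val < K := by
            by_contra hA; rw [if_neg hA] at hla; omega
          have hb : b.val < K := by
            by_contra hB; rw [if_neg hB] at hlb; omega
          have hc : c.val < K := by
            by_contra hC; rw [if_neg hC] at hlc; omega
          exact ⟨ha, hb, hc⟩
        omega
      · intro x hx
        rcases hx with rfl | rfl | rfl
        · exact Or.inl hmema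
        · exact Or.inr (Or.inl hmemb)
        · exact Or.inr (Or.inr hmemc)
  · -- Singleton condition
    intro x hx2
    by_cases hxK : x.val < K
    · set x' : Fin K := ⟨x.val, hxK⟩ with hx'
      have hgx : g x' = x := Fin.ext rfl
      -- occurrence sets agree
      have hset : {ℓ | OccursAt s' x ℓ} = {ℓ | OccursAt s x' ℓ} := by
        ext ℓ
        simp only [Set.mem_setOf_eq]
        constructor
        · rintro ⟨h1, i, hget⟩
          refine ⟨h1, ?_⟩
          by_cases h : i.val < d
          · rw [hs'old i h, List.getElem?_map] at hget
            cases hsm : (s ⟨i.val, h⟩)[ℓ - 1]? with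
            | none => rw [hsm] at hget; simp at hget
            | some y =>
              rw [hsm] at hget
              simp only [Option.map_some] at hget
              have hy : y = x' := by
                apply Fin.ext
                have := congrArg Fin.val (Option.some.inj hget)
                exact this
              exact ⟨⟨i.val, h⟩, by rw [hsm, hy]⟩
          · exfalso
            rw [hs'new i h] at hget
            have hmem := List.mem_of_getElem? hget
            rw [List.mem_ofFn] at hmem
            obtain ⟨t, ht⟩ := hmem
            have := congrArg Fin.val ht
            rw [hEval] at this
            omega
        · rintro ⟨h1, i, hget⟩
          refine ⟨h1, Fin.castLE hdd'.le i, ?_⟩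
          rw [hs'old _ (show (Fin.castLE hdd'.le i).val < d from i.isLt),
            List.getElem?_map]
          simp only [Fin.coe_castLE, Fin.eta]
          rw [hget]
          simp only [Option.map_some]
          rw [hgx]
      -- counts agree
      have hcnt : totalCount s' x = totalCount s x' := by
        have hFC : ∀ i : Fin d',
            (s' i).count x = if h : i.val < d then (s ⟨i.val, h⟩).count x' else 0 := by
          intro i
          by_cases h : i.val < d
          · rw [dif_pos h, hs'old i h, ← hgx]
            exact List.count_map_of_injective _ g hginj x'
          · rw [dif_neg h, hs'new i h, List.count_eq_zero]
            intro hmem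
            rw [List.mem_ofFn] at hmem
            obtain ⟨t, ht⟩ := hmem
            have := congrArg Fin.val ht
            rw [hEval] at this
            omega
        unfold totalCount
        have hstep1 : ∑ i : Fin d', (s' i).count x
            = ∑ m ∈ Finset.range d',
                (fun m => if h : m < d then (s ⟨m, h⟩).count x' else 0) m := by
          rw [← Fin.sum_univ_eq_sum_range]
          exact Finset.sum_congr rfl fun i _ => hFC i
        rw [hstep1]
        rw [← Finset.sum_subset (Finset.range_subset_range.mpr hdd'.le)
          (fun m _ hm => by
            rw [dif_neg]
            simp only [Finset.mem_range] at hm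
            omega)]
        rw [← Fin.sum_univ_eq_sum_range]
        exact Finset.sum_congr rfl fun i _ => by rw [dif_pos i.isLt]
      have h2 : 2 ≤ totalCount s x' := hcnt ▸ hx2
      have := hpcd.2 x' h2
      unfold lMin lMax at *
      rw [hset]
      exact this
    · -- new element: occurs at most once, contradiction with 2 ≤ totalCount
      exfalso
      have hxge : K ≤ x.val := le_of_not_gt hxK
      obtain ⟨j, t, hjd, htf, hxval⟩ := hnewdecomp x hxge
      set i0 : Fin d' := ⟨d + j, by omega⟩ with hi0
      have hbound : ∀ i : Fin d', (s' i).count x ≤ if i = i0 then 1 else 0 := by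
        intro i
        by_cases h : i.val < d
        · have hz : (s' i).count x = 0 := by
            rw [List.count_eq_zero]
            intro hmem
            exact absurd (hmemold i h x hmem) (by omega)
          rw [hz]
          split <;> omega
        · by_cases hi : i = i0
          · subst hi
            rw [if_pos rfl, hs'new _ h]
            apply List.nodup_iff_count_le_one.mp
            apply List.nodup_ofFn.mpr
            intro t1 t2 heq
            apply Fin.ext
            have := congrArg Fin.val heq
            rw [hEval, hEval] at this
            omega
          · rw [if_neg hi]
            have hz : (s' i).count x = 0 := by
              rw [List.count_eq_zero]
              intro hmem
              rw [hs'new i h] at hmem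
              rw [List.mem_ofFn] at hmem
              obtain ⟨t', ht'⟩ := hmem
              have hv := congrArg Fin.val ht'
              rw [hEval] at hv
              simp only at hv
              have heq : (i.val - d) * f + t'.val = j * f + t := by omega
              obtain ⟨hj', _⟩ := base_decomp_unique t'.isLt htf heq
              apply hi
              apply Fin.ext
              simp only [hi0]
              omega
            rw [hz]
      have hsum : totalCount s' x ≤ 1 := by
        unfold totalCount
        calc ∑ i : Fin d', (s' i).count x
            ≤ ∑ i : Fin d', (if i = i0 then 1 else 0) :=
              Finset.sum_le_sum fun i _ => hbound i
          _ = 1 := by rw [Finset.sum_ite_eq' Finset.univ i0 (fun _ => 1)]; simp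
      omega
end
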